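/- arXiv:2602.11892 — 5 statements merged into one kernel-verified Lean document; each statement's English description precedes it below -/
import Mathlib

section
/- Let G be a circuit in an abstract 2-rigidity matroid with the 0-extension property, and suppose there are vertices u, w and edge-disjoint subgraphs X, Y each with at least 2 edges partitioning the edges of G, with V(X) ∩ V(Y) = {u, w}. Then {u,w} is not an edge of G, and both X + {u,w} and Y + {u,w} are circuits of the matroid. -/
/-- The vertex set of a graph given as a set of (undirected) edges. -/
def vertsOf {α : Type*} (G : Set (Sym2 α)) : Set α := {v | ∃ e ∈ G, v ∈ e}

/-- The degree of a vertex in a graph given as a set of edges. -/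
noncomputable def edeg {α : Type*} (G : Set (Sym2 α)) (v : α) : ℕ := {e ∈ G | v ∈ e}.ncard

/-- Laman's sparsity condition: every set of at least two vertices spans at
most `2m - 3` edges. This characterizes independence in the generic plane
rigidity matroid. -/
def Laman {n : ℕ} (G : Set (Sym2 (Fin n))) : Prop :=
  ∀ U : Finset (Fin n), 2 ≤ U.card →
    {e ∈ G | ∀ v ∈ e, v ∈ U}.ncard ≤ 2 * U.card - 3

/-- A circuit of a matroid: a dependent set all of whose proper subsets are
independent. -/
def IsCircuitIn {β : Type*} (M : Matroid β) (C : Set β) : Prop :=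
  M.Dep C ∧ ∀ D : Set β, D ⊂ C → M.Indep D

/-- The matroid `M` has rank `k` (every base has `k` elements). -/
def RankEq {β : Type*} (M : Matroid β) (k : ℕ) : Prop :=
  ∀ B : Set β, M.IsBase B → B.ncard = k

/-- The edge set of a copy of `K₄` given by an injection `f : Fin 4 ↪ Fin n`. -/
def K4Copy {n : ℕ} (f : Fin 4 ↪ Fin n) : Set (Sym2 (Fin n)) :=
  {e | ∃ u v : Fin 4, u ≠ v ∧ e = s(f u, f v)}

/-- An abstract 2-rigidity matroid on the edge set of `K_n`: its ground set
consists of all non-loop edges, it has rank `2n - 3`, and every copy of `K₄`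
is a circuit. -/
def Rigidity2Matroid {n : ℕ} (M : Matroid (Sym2 (Fin n))) : Prop :=
  M.E = {e : Sym2 (Fin n) | ¬ e.IsDiag} ∧ RankEq M (2 * n - 3) ∧
    ∀ f : Fin 4 ↪ Fin n, IsCircuitIn M (K4Copy f)

/-- A matroidal 2-rigidity family: a sequence of graph matroids of rank
`2n - 3`, symmetric and hereditary in the sense that independence is
preserved under any injection of the vertex set. -/
structure RigFamily where
  M : (n : ℕ) → Matroid (Sym2 (Fin n))
  ground : ∀ n : ℕ, (M n).E = {e : Sym2 (Fin n) | ¬ e.IsDiag}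
  rank : ∀ n : ℕ, 2 ≤ n → RankEq (M n) (2 * n - 3)
  hered : ∀ {n m : ℕ} (f : Fin n ↪ Fin m) (G : Set (Sym2 (Fin n))),
    (M n).Indep G ↔ (M m).Indep (Sym2.map (⇑f) '' G)

/-- The 0-extension property: attaching a new vertex by at most two edges to
an independent graph keeps it independent. -/
def ZeroExt (F : RigFamily) : Prop :=
  ∀ (n : ℕ) (G : Set (Sym2 (Fin n))) (v a b : Fin n),
    v ∉ vertsOf G → v ≠ a → v ≠ b →
    (F.M n).Indep G → (F.M n).Indep (G ∪ {s(v, a), s(v, b)})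

/-- Adjacency in a graph given as a set of edges. -/
def EAdj {α : Type*} (G : Set (Sym2 α)) (a b : α) : Prop := a ≠ b ∧ s(a, b) ∈ G

/-- Connectivity of a graph given as a set of edges: any two of its vertices
are joined by a walk. -/
def EConnected {α : Type*} (G : Set (Sym2 α)) : Prop :=
  ∀ u ∈ vertsOf G, ∀ w ∈ vertsOf G, Relation.ReflTransGen (EAdj G) u w

section Aux

open Set

variable {β : Type*} {M : Matroid β} {C C₁ C₂ D : Set β} {f e : β}

lemma IsCircuitIn.diff_indep (hC : IsCircuitIn M C) (hf : f ∈ C) : M.Indep (C \ {f}) :=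
  hC.2 _ (sdiff_singleton_ssubset.2 hf)

lemma IsCircuitIn.mem_closure (hC : IsCircuitIn M C) (hf : f ∈ C) :
    f ∈ M.closure (C \ {f}) := by
  have hind := hC.diff_indep hf
  have hdep : M.Dep (insert f (C \ {f})) := by
    rw [Set.insert_diff_singleton, Set.insert_eq_of_mem hf]
    exact hC.1
  exact (hind.insert_dep_iff.1 hdep).1

lemma exists_circuitIn_of_dep (hfin : D.Finite) (hD : M.Dep D) :
    ∃ C, C ⊆ D ∧ IsCircuitIn M C := by
  obtain ⟨k, hk⟩ : ∃ k, D.ncard ≤ k := ⟨D.ncard, le_rfl⟩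
  induction k generalizing D with
  | zero =>
    rw [Nat.le_zero, Set.ncard_eq_zero hfin] at hk
    subst hk
    exact absurd M.empty_indep hD.not_indep
  | succ k ih =>
    by_cases h : ∀ D' : Set β, D' ⊂ D → M.Indep D'
    · exact ⟨D, Set.Subset.rfl, hD, h⟩
    · push_neg at h
      obtain ⟨D', hss, hni⟩ := h
      have hD' : M.Dep D' := ⟨hni, hss.subset.trans hD.subset_ground⟩
      have hcard : D'.ncard ≤ k := by
        have := Set.ncard_lt_ncard hss hfin
        omega
      obtain ⟨C, hCD, hC⟩ := ih (hfin.subset hss.subset) hD' hcard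
      exact ⟨C, hCD.trans hss.subset, hC⟩

lemma circuitIn_elim (hC₁ : IsCircuitIn M C₁) (hC₂ : IsCircuitIn M C₂) (hne : C₁ ≠ C₂)
    (he₁ : e ∈ C₁) (he₂ : e ∈ C₂) : M.Dep ((C₁ ∪ C₂) \ {e}) := by
  obtain ⟨f, hf1, hf2⟩ : ∃ f, f ∈ C₁ ∧ f ∉ C₂ := by
    by_contra h
    push_neg at h
    exact (hC₂.2 C₁ (ssubset_of_subset_of_ne h hne)).not_dep hC₁.1
  have hfe : f ≠ e := fun h => hf2 (h ▸ he₂)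
  set A := (C₁ ∪ C₂) \ {e, f} with hA
  have h1 : e ∈ M.closure A := by
    refine M.closure_subset_closure ?_ (hC₂.mem_closure he₂)
    rintro x ⟨hx, hxe⟩
    rw [Set.mem_singleton_iff] at hxe
    refine ⟨Or.inr hx, ?_⟩
    rintro (rfl | rfl)
    · exact hxe rfl
    · exact hf2 hx
  have h2 : f ∈ M.closure (insert e A) := by
    refine M.closure_subset_closure ?_ (hC₁.mem_closure hf1)
    rintro x ⟨hx, hxf⟩
    rw [Set.mem_singleton_iff] at hxf
    by_cases hxe : x = e
    · exact hxe ▸ Set.mem_insert _ _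
    · exact Set.mem_insert_of_mem _ ⟨Or.inl hx, by rintro (rfl | rfl) <;> [exact hxe rfl; exact hxf rfl]⟩
  have h3 : f ∈ M.closure A := by
    rwa [Matroid.closure_insert_eq_of_mem_closure h1] at h2
  rw [Matroid.dep_iff]
  constructor
  · intro hind
    have hfD : f ∈ (C₁ ∪ C₂) \ {e} := ⟨Or.inl hf1, by simpa using hfe⟩
    refine hind.notMem_closure_diff_of_mem hfD ?_
    have heq : ((C₁ ∪ C₂) \ {e}) \ {f} = A := by
      rw [hA, Set.diff_diff]
      rfl
    rwa [heq]
  · exact Set.diff_subset.trans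
      (Set.union_subset hC₁.1.subset_ground hC₂.1.subset_ground)

end Aux

section RigAux

open Set

variable {n : ℕ} {M : Matroid (Sym2 (Fin n))}

lemma mem_vertsOf {α : Type*} {G : Set (Sym2 α)} {v : α} :
    v ∈ vertsOf G ↔ ∃ e ∈ G, v ∈ e := Iff.rfl

/-- The "fan" attaching every vertex of `S` to both `u` and `w`. -/
def fanSet (S : Finset (Fin n)) (u w : Fin n) : Set (Sym2 (Fin n)) :=
  ⋃ v ∈ S, {s(v, u), s(v, w)}

lemma mem_fanSet {S : Finset (Fin n)} {u w : Fin n} {x : Sym2 (Fin n)} :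
    x ∈ fanSet S u w ↔ ∃ v ∈ S, x = s(v, u) ∨ x = s(v, w) := by
  simp [fanSet]

lemma fanSet_insert (a : Fin n) (S : Finset (Fin n)) (u w : Fin n) :
    fanSet (insert a S) u w = insert s(a, u) (insert s(a, w) (fanSet S u w)) := by
  ext x
  simp only [mem_fanSet, Finset.mem_insert, Set.mem_insert_iff]
  constructor
  · rintro ⟨v, rfl | hv, h⟩
    · tauto
    · exact Or.inr (Or.inr ⟨v, hv, h⟩)
  · rintro (rfl | rfl | ⟨v, hv, h⟩)
    · exact ⟨a, Or.inl rfl, Or.inl rfl⟩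
    · exact ⟨a, Or.inl rfl, Or.inr rfl⟩
    · exact ⟨v, Or.inr hv, h⟩

lemma vert_of_mem_fanSet {S : Finset (Fin n)} {u w : Fin n} {x : Sym2 (Fin n)} {c : Fin n}
    (hx : x ∈ fanSet S u w) (hc : c ∈ x) : c ∈ S ∨ c = u ∨ c = w := by
  obtain ⟨v, hv, rfl | rfl⟩ := mem_fanSet.1 hx <;>
    rcases Sym2.mem_iff.1 hc with rfl | rfl <;> tauto

lemma fan_indep
    (hzero : ∀ (G : Set (Sym2 (Fin n))) (v a b : Fin n),
      v ∉ vertsOf G → v ≠ a → v ≠ b →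
      M.Indep G → M.Indep (G ∪ {s(v, a), s(v, b)}))
    (u w : Fin n) {J : Set (Sym2 (Fin n))} (hJ : M.Indep J)
    (S : Finset (Fin n)) (hS : ∀ v ∈ S, v ∉ vertsOf J ∧ v ≠ u ∧ v ≠ w) :
    M.Indep (J ∪ fanSet S u w) := by
  classical
  induction S using Finset.induction_on with
  | empty => simpa [fanSet] using hJ
  | @insert a S haS ih =>
    have hrec := ih fun v hv => hS v (Finset.mem_insert_of_mem hv)
    have ha := hS a (Finset.mem_insert_self a S)
    have hav : a ∉ vertsOf (J ∪ fanSet S u w) := by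
      rintro ⟨x, hx, hax⟩
      rcases hx with hx | hx
      · exact ha.1 ⟨x, hx, hax⟩
      · rcases vert_of_mem_fanSet hx hax with h | h | h
        · exact haS h
        · exact ha.2.1 h
        · exact ha.2.2 h
    have := hzero (J ∪ fanSet S u w) a u w hav ha.2.1 ha.2.2 hrec
    have heq : (J ∪ fanSet S u w) ∪ {s(a, u), s(a, w)} = J ∪ fanSet (insert a S) u w := by
      rw [fanSet_insert]
      ext x
      simp only [Set.mem_union, Set.mem_insert_iff, Set.mem_singleton_iff]
      tauto
    rwa [heq] at this

lemma fan_ncard (u w : Fin n) (huw : u ≠ w)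
    (S : Finset (Fin n)) (hS : ∀ v ∈ S, v ≠ u ∧ v ≠ w) :
    (fanSet S u w).ncard = 2 * S.card := by
  classical
  induction S using Finset.induction_on with
  | empty => simp [fanSet]
  | @insert a S haS ih =>
    have ha := hS a (Finset.mem_insert_self a S)
    have h1 : s(a, u) ∉ fanSet S u w := by
      intro h
      rcases vert_of_mem_fanSet h (by simp : a ∈ s(a, u)) with h | h | h
      · exact haS h
      · exact ha.1 h
      · exact ha.2 h
    have h2 : s(a, w) ∉ fanSet S u w := by
      intro h
      rcases vert_of_mem_fanSet h (by simp : a ∈ s(a, w)) with h | h | h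
      · exact haS h
      · exact ha.1 h
      · exact ha.2 h
    have hne : s(a, u) ≠ s(a, w) := by
      intro h
      rw [Sym2.eq_iff] at h
      rcases h with ⟨-, h⟩ | ⟨h, -⟩
      · exact huw h
      · exact ha.2 h
    rw [fanSet_insert, Set.ncard_insert_of_notMem (by simp [Set.mem_insert_iff, hne, h1]),
      Set.ncard_insert_of_notMem h2, ih fun v hv => hS v (Finset.mem_insert_of_mem hv),
      Finset.card_insert_of_notMem haS]
    ring

lemma single_edge_indep
    (hE : M.E = {e : Sym2 (Fin n) | ¬ e.IsDiag})
    (hloc : ∀ U : Finset (Fin n), 2 ≤ U.card →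
      ∀ I : Set (Sym2 (Fin n)),
        M.IsBasis I {e : Sym2 (Fin n) | ¬ e.IsDiag ∧ ∀ v ∈ e, v ∈ U} →
        I.ncard = 2 * U.card - 3)
    {u w : Fin n} (huw : u ≠ w) : M.Indep {s(u, w)} := by
  classical
  set U : Finset (Fin n) := {u, w} with hU
  have hUcard : U.card = 2 := by
    rw [hU, Finset.card_insert_of_notMem (by simpa using huw), Finset.card_singleton]
  have hset : {e : Sym2 (Fin n) | ¬ e.IsDiag ∧ ∀ v ∈ e, v ∈ U} = {s(u, w)} := by
    ext x
    induction x using Sym2.ind with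
    | _ a b =>
      simp only [Set.mem_setOf_eq, Sym2.mk_isDiag_iff, Sym2.mem_iff, Set.mem_singleton_iff,
        Sym2.eq_iff, hU, Finset.mem_insert, Finset.mem_singleton]
      constructor
      · rintro ⟨hab, h⟩
        rcases h a (Or.inl rfl) with rfl | rfl <;> rcases h b (Or.inr rfl) with rfl | rfl <;> tauto
      · rintro (⟨rfl, rfl⟩ | ⟨rfl, rfl⟩) <;> constructor <;> first | (exact huw) | (exact huw.symm) | tauto
  have hsubE : {e : Sym2 (Fin n) | ¬ e.IsDiag ∧ ∀ v ∈ e, v ∈ U} ⊆ M.E := by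
    rw [hE]; exact fun x hx => hx.1
  obtain ⟨I, hI⟩ := M.exists_isBasis _ hsubE
  have h1 := hloc U (by omega) I hI
  rw [hUcard] at h1
  have hIsub : I ⊆ {s(u, w)} := hset ▸ hI.subset
  have : I = {s(u, w)} :=
    Set.eq_of_subset_of_ncard_le hIsub (by rw [h1]; simp) (Set.toFinite _)
  exact this ▸ hI.indep

lemma fan_spans
    (hE : M.E = {e : Sym2 (Fin n) | ¬ e.IsDiag})
    (hloc : ∀ U : Finset (Fin n), 2 ≤ U.card →
      ∀ I : Set (Sym2 (Fin n)),
        M.IsBasis I {e : Sym2 (Fin n) | ¬ e.IsDiag ∧ ∀ v ∈ e, v ∈ U} →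
        I.ncard = 2 * U.card - 3)
    {u w : Fin n} (huw : u ≠ w) (U : Finset (Fin n)) (hu : u ∈ U) (hw : w ∈ U)
    (hind : M.Indep (fanSet (U \ {u, w}) u w ∪ {s(u, w)})) :
    {e : Sym2 (Fin n) | ¬ e.IsDiag ∧ ∀ v ∈ e, v ∈ U} ⊆
      M.closure (fanSet (U \ {u, w}) u w ∪ {s(u, w)}) := by
  classical
  set KU := {e : Sym2 (Fin n) | ¬ e.IsDiag ∧ ∀ v ∈ e, v ∈ U} with hKU
  have hSmem : ∀ v ∈ U \ ({u, w} : Finset (Fin n)), v ≠ u ∧ v ≠ w := by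
    intro v hv
    rw [Finset.mem_sdiff, Finset.mem_insert, Finset.mem_singleton] at hv
    exact ⟨fun h => hv.2 (Or.inl h), fun h => hv.2 (Or.inr h)⟩
  have hKE : KU ⊆ M.E := by rw [hE]; exact fun x hx => hx.1
  have hsubK : fanSet (U \ {u, w}) u w ∪ {s(u, w)} ⊆ KU := by
    rintro x (hx | hx)
    · obtain ⟨v, hv, rfl | rfl⟩ := mem_fanSet.1 hx
      · have hv' := hSmem v hv
        have hvU : v ∈ U := (Finset.mem_sdiff.1 hv).1
        exact ⟨by simp [Sym2.mk_isDiag_iff, hv'.1], by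
          intro c hc; rcases Sym2.mem_iff.1 hc with rfl | rfl <;> assumption⟩
      · have hv' := hSmem v hv
        have hvU : v ∈ U := (Finset.mem_sdiff.1 hv).1
        exact ⟨by simp [Sym2.mk_isDiag_iff, hv'.2], by
          intro c hc; rcases Sym2.mem_iff.1 hc with rfl | rfl <;> assumption⟩
    · rw [Set.mem_singleton_iff] at hx
      subst hx
      exact ⟨by simp [Sym2.mk_isDiag_iff, huw], by
        intro c hc; rcases Sym2.mem_iff.1 hc with rfl | rfl <;> assumption⟩
  obtain ⟨I, hI, hsubI⟩ := hind.subset_isBasis_of_subset hsubK hKE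
  have hUc : 2 ≤ U.card := Finset.one_lt_card.2 ⟨u, hu, w, hw, huw⟩
  have hcard := hloc U hUc I hI
  have hpairsub : ({u, w} : Finset (Fin n)) ⊆ U := by
    intro x hx
    rcases Finset.mem_insert.1 hx with rfl | hx
    · exact hu
    · exact (Finset.mem_singleton.1 hx) ▸ hw
  have hSc : (U \ ({u, w} : Finset (Fin n))).card = U.card - 2 := by
    rw [Finset.card_sdiff_of_subset hpairsub, Finset.card_insert_of_notMem (by simpa using huw),
      Finset.card_singleton]
  have hnotmem : s(u, w) ∉ fanSet (U \ {u, w}) u w := by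
    intro h
    obtain ⟨v, hv, heq | heq⟩ := mem_fanSet.1 h <;>
    · have hv' := hSmem v hv
      rw [Sym2.eq_iff] at heq
      tauto
  have htot : (fanSet (U \ {u, w}) u w ∪ {s(u, w)}).ncard = 2 * U.card - 3 := by
    rw [Set.union_singleton, Set.ncard_insert_of_notMem hnotmem,
      fan_ncard u w huw _ hSmem, hSc]
    omega
  have heqI : fanSet (U \ {u, w}) u w ∪ {s(u, w)} = I :=
    Set.eq_of_subset_of_ncard_le hsubI (by rw [hcard, htot]) (Set.toFinite _)
  rw [← heqI] at hI
  exact hI.subset_closure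

lemma key_dep
    (hE : M.E = {e : Sym2 (Fin n) | ¬ e.IsDiag})
    (hloc : ∀ U : Finset (Fin n), 2 ≤ U.card →
      ∀ I : Set (Sym2 (Fin n)),
        M.IsBasis I {e : Sym2 (Fin n) | ¬ e.IsDiag ∧ ∀ v ∈ e, v ∈ U} →
        I.ncard = 2 * U.card - 3)
    (hzero : ∀ (G : Set (Sym2 (Fin n))) (v a b : Fin n),
      v ∉ vertsOf G → v ≠ a → v ≠ b →
      M.Indep G → M.Indep (G ∪ {s(v, a), s(v, b)}))
    {G : Set (Sym2 (Fin n))} (hG : IsCircuitIn M G)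
    {u w : Fin n} (huw : u ≠ w) {X Y : Set (Sym2 (Fin n))}
    (hXY : X ∪ Y = G) (hdisj : Disjoint X Y)
    (hX2 : 2 ≤ X.ncard) (hY2 : 2 ≤ Y.ncard)
    (hmeet : vertsOf X ∩ vertsOf Y = {u, w}) :
    M.Dep (Y ∪ {s(u, w)}) := by
  classical
  have hGE : G ⊆ M.E := hG.1.subset_ground
  have hXG : X ⊆ G := hXY ▸ Set.subset_union_left
  have hYG : Y ⊆ G := hXY ▸ Set.subset_union_right
  have hXne : X.Nonempty := (Set.ncard_pos (Set.toFinite _)).1 (by omega)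
  have heE : s(u, w) ∈ M.E := by
    rw [hE]; simpa [Sym2.mk_isDiag_iff] using huw
  -- the pair {u,w} lies in both vertex sets
  have hpair : ({u, w} : Set (Fin n)) ⊆ vertsOf X ∩ vertsOf Y := hmeet ▸ Set.Subset.rfl
  have huX : u ∈ vertsOf X := (hpair (Set.mem_insert _ _)).1
  have hwX : w ∈ vertsOf X := (hpair (Set.mem_insert_of_mem _ rfl)).1
  have huY : u ∈ vertsOf Y := (hpair (Set.mem_insert _ _)).2
  have hwY : w ∈ vertsOf Y := (hpair (Set.mem_insert_of_mem _ rfl)).2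
  -- choose f ∈ Y with f ≠ uw
  obtain ⟨f, hfY, hfne⟩ := Set.exists_ne_of_one_lt_ncard (by omega : 1 < Y.ncard) s(u, w)
  set B := Y \ {f} with hB
  have hBesub : B ∪ {s(u, w)} ⊆ M.E := by
    refine Set.union_subset ?_ (by simpa using heE)
    exact (Set.diff_subset.trans hYG).trans hGE
  obtain ⟨J, hJ⟩ := M.exists_isBasis (B ∪ {s(u, w)}) hBesub
  -- verts of J lie in vertsOf Y
  have hvertsY : ∀ x ∈ B ∪ {s(u, w)}, ∀ c ∈ x, c ∈ vertsOf Y := by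
    rintro x (hx | hx) c hc
    · exact ⟨x, hx.1, hc⟩
    · rw [Set.mem_singleton_iff] at hx
      subst hx
      rcases Sym2.mem_iff.1 hc with rfl | rfl <;> assumption
  have hvertsJ : vertsOf J ⊆ vertsOf Y := by
    rintro c ⟨x, hx, hcx⟩
    exact hvertsY x (hJ.subset hx) c hcx
  -- the fan over the vertices of X
  set U : Finset (Fin n) := (vertsOf X).toFinite.toFinset with hUdef
  have hUmem : ∀ v, v ∈ U ↔ v ∈ vertsOf X := fun v => Set.Finite.mem_toFinset _
  set S : Finset (Fin n) := U \ {u, w} with hSdef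
  have hSprop : ∀ v ∈ S, v ∉ vertsOf Y ∧ v ≠ u ∧ v ≠ w := by
    intro v hv
    rw [hSdef, Finset.mem_sdiff, Finset.mem_insert, Finset.mem_singleton] at hv
    refine ⟨fun hvy => hv.2 ?_, fun h => hv.2 (Or.inl h), fun h => hv.2 (Or.inr h)⟩
    have : v ∈ vertsOf X ∩ vertsOf Y := ⟨(hUmem v).1 hv.1, hvy⟩
    rw [hmeet] at this
    simpa using this
  have hJF : M.Indep (J ∪ fanSet S u w) := by
    refine fan_indep hzero u w hJ.indep S fun v hv => ?_
    obtain ⟨h1, h2, h3⟩ := hSprop v hv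
    exact ⟨fun hvJ => h1 (hvertsJ hvJ), h2, h3⟩
  have heclJ : s(u, w) ∈ M.closure J :=
    hJ.subset_closure (Set.mem_union_right _ rfl)
  -- the fan together with uw is independent and spans K on vertsOf X
  have hfanE : M.Indep (fanSet S u w ∪ {s(u, w)}) := by
    have hsing : M.Indep {s(u, w)} := single_edge_indep hE hloc huw
    have := fan_indep hzero u w hsing S ?_
    · rwa [Set.union_comm] at this
    · intro v hv
      obtain ⟨h1, h2, h3⟩ := hSprop v hv
      refine ⟨?_, h2, h3⟩
      rintro ⟨x, hx, hvx⟩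
      rw [Set.mem_singleton_iff] at hx
      subst hx
      rcases Sym2.mem_iff.1 hvx with rfl | rfl
      · exact h2 rfl
      · exact h3 rfl
  have hspan := fan_spans hE hloc huw U ((hUmem u).2 huX) ((hUmem w).2 hwX) hfanE
  have hXcl : X ⊆ M.closure (fanSet S u w ∪ {s(u, w)}) := by
    intro x hx
    refine hspan ⟨?_, ?_⟩
    · have : x ∈ M.E := hGE (hXG hx)
      rwa [hE] at this
    · intro c hc
      exact (hUmem c).2 ⟨x, hx, hc⟩
  have hcl2 : M.closure (fanSet S u w ∪ {s(u, w)}) ⊆ M.closure (J ∪ fanSet S u w) := by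
    refine M.closure_subset_closure_of_subset_closure ?_
    rintro x (hx | hx)
    · exact M.subset_closure _ hJF.subset_ground (Set.mem_union_right _ hx)
    · rw [Set.mem_singleton_iff] at hx
      subst hx
      exact M.closure_subset_closure Set.subset_union_left heclJ
  have hGfcl : G \ {f} ⊆ M.closure (J ∪ fanSet S u w) := by
    rintro x ⟨hxG, hxf⟩
    rw [Set.mem_singleton_iff] at hxf
    rw [← hXY] at hxG
    rcases hxG with hx | hx
    · exact hcl2 (hXcl hx)
    · have hxB : x ∈ B := ⟨hx, by simpa using hxf⟩
      have : x ∈ M.closure J := hJ.subset_closure (Set.mem_union_left _ hxB)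
      exact M.closure_subset_closure Set.subset_union_left this
  have hfcl : f ∈ M.closure (J ∪ fanSet S u w) := by
    have h1 : f ∈ M.closure (G \ {f}) := hG.mem_closure (hYG hfY)
    have h2 := M.closure_subset_closure_of_subset_closure hGfcl
    exact h2 h1
  have hfnotin : f ∉ J ∪ fanSet S u w := by
    rintro (hf | hf)
    · rcases hJ.subset hf with hf' | hf'
      · exact hf'.2 rfl
      · exact hfne (by simpa using hf')
    · obtain ⟨v, hv, rfl | rfl⟩ := mem_fanSet.1 hf <;>
        exact (hSprop v hv).1 ⟨_, hfY, by simp⟩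
  have hdep1 : M.Dep (insert f (J ∪ fanSet S u w)) :=
    hJF.insert_dep_iff.2 ⟨hfcl, hfnotin⟩
  obtain ⟨C, hCsub, hC⟩ := exists_circuitIn_of_dep (Set.toFinite _) hdep1
  have hfC : f ∈ C := by
    by_contra hfC
    refine hC.1.not_indep (hJF.subset fun x hx => ?_)
    rcases hCsub hx with rfl | h
    · exact absurd hx hfC
    · exact h
  -- C avoids the fan, by the degree-3 property of circuits
  have hCfan : ∀ g ∈ C, g ∉ fanSet S u w := by
    intro g hgC hgfan
    obtain ⟨v, hv, hg⟩ := mem_fanSet.1 hgfan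
    obtain ⟨hv1, hv2, hv3⟩ := hSprop v hv
    -- every edge of C containing v is s(v,u) or s(v,w)
    have hsub : ∀ x ∈ C, v ∈ x → x = s(v, u) ∨ x = s(v, w) := by
      intro x hx hvx
      rcases hCsub hx with rfl | hx' | hx'
      · exact absurd ⟨x, hfY, hvx⟩ hv1
      · exact absurd (hvertsJ ⟨x, hx', hvx⟩) hv1
      · obtain ⟨v', hv', rfl | rfl⟩ := mem_fanSet.1 hx' <;>
        · rcases Sym2.mem_iff.1 hvx with rfl | rfl
          · tauto
          · first | exact absurd rfl hv2 | exact absurd rfl hv3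
    -- contradiction with zero-extension
    set C' := {x ∈ C | v ∉ x} with hC'
    have hC'ss : C' ⊂ C := by
      refine ⟨fun x hx => hx.1, fun hsub' => ?_⟩
      have : g ∈ C' := hsub' hgC
      rcases hg with rfl | rfl <;> exact this.2 (by simp)
    have hC'ind : M.Indep C' := hC.2 _ hC'ss
    have hvC' : v ∉ vertsOf C' := by
      rintro ⟨x, hx, hvx⟩
      exact hx.2 hvx
    have hind2 := hzero C' v u w hvC' hv2 hv3 hC'ind
    refine hC.1.not_indep (hind2.subset fun x hx => ?_)
    by_cases hvx : v ∈ x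
    · rcases hsub x hx hvx with rfl | rfl
      · exact Set.mem_union_right _ (Set.mem_insert _ _)
      · exact Set.mem_union_right _ (Set.mem_insert_of_mem _ rfl)
    · exact Set.mem_union_left _ ⟨hx, hvx⟩
  have hCJ : C \ {f} ⊆ J := by
    rintro x ⟨hx, hxf⟩
    rw [Set.mem_singleton_iff] at hxf
    rcases hCsub hx with rfl | h | h
    · exact absurd rfl hxf
    · exact h
    · exact absurd h (hCfan x hx)
  have hfclJ : f ∈ M.closure J :=
    M.closure_subset_closure hCJ (hC.mem_closure hfC)
  have hfclBe : f ∈ M.closure (B ∪ {s(u, w)}) := by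
    rwa [← hJ.closure_eq_closure]
  -- conclude
  by_cases hI : M.Indep (B ∪ {s(u, w)})
  · have hfnot : f ∉ B ∪ {s(u, w)} := by
      rintro (hf | hf)
      · exact hf.2 rfl
      · exact hfne (by simpa using hf)
    have hdep2 : M.Dep (insert f (B ∪ {s(u, w)})) :=
      hI.insert_dep_iff.2 ⟨hfclBe, hfnot⟩
    have heq : insert f (B ∪ {s(u, w)}) = Y ∪ {s(u, w)} := by
      ext x
      simp only [Set.mem_insert_iff, Set.mem_union, hB, Set.mem_diff,
        Set.mem_singleton_iff]
      constructor
      · rintro (rfl | ⟨hx, -⟩ | hx) <;> tauto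
      · rintro (hx | hx)
        · by_cases hxf : x = f <;> tauto
        · tauto
    rwa [heq] at hdep2
  · refine ⟨fun hind => hI (hind.subset ?_), ?_⟩
    · exact Set.union_subset_union_left _ Set.diff_subset
    · exact Set.union_subset (hYG.trans hGE) (by simpa using heE)

end RigAux

/-- The 2-separation lemma: if a circuit `G` of an abstract 2-rigidity
matroid (with the 0-extension property and local ranks `2|U| - 3` on
complete graphs) is partitioned into edge sets `X`, `Y` with at least two
edges each, meeting only in the two vertices `u, w`, then `{u,w}` is not an
edge of `G` and both `X + uw` and `Y + uw` are circuits. -/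
theorem stmt14 (n : ℕ) (M : Matroid (Sym2 (Fin n))) (hM : Rigidity2Matroid M)
    (hloc : ∀ U : Finset (Fin n), 2 ≤ U.card →
      ∀ I : Set (Sym2 (Fin n)),
        M.IsBasis I {e : Sym2 (Fin n) | ¬ e.IsDiag ∧ ∀ v ∈ e, v ∈ U} →
        I.ncard = 2 * U.card - 3)
    (hzero : ∀ (G : Set (Sym2 (Fin n))) (v a b : Fin n),
      v ∉ vertsOf G → v ≠ a → v ≠ b →
      M.Indep G → M.Indep (G ∪ {s(v, a), s(v, b)}))
    (G : Set (Sym2 (Fin n))) (hG : IsCircuitIn M G)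
    (u w : Fin n) (huw : u ≠ w) (X Y : Set (Sym2 (Fin n)))
    (hXY : X ∪ Y = G) (hdisj : Disjoint X Y)
    (hX2 : 2 ≤ X.ncard) (hY2 : 2 ≤ Y.ncard)
    (hmeet : vertsOf X ∩ vertsOf Y = {u, w}) :
    s(u, w) ∉ G ∧ IsCircuitIn M (X ∪ {s(u, w)}) ∧
      IsCircuitIn M (Y ∪ {s(u, w)}) := by
  classical
  have hE := hM.1
  have hGE : G ⊆ M.E := hG.1.subset_ground
  have hXG : X ⊆ G := hXY ▸ Set.subset_union_left
  have hYG : Y ⊆ G := hXY ▸ Set.subset_union_right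
  have hXne : X.Nonempty := (Set.ncard_pos (Set.toFinite _)).1 (by omega)
  have hYne : Y.Nonempty := (Set.ncard_pos (Set.toFinite _)).1 (by omega)
  have hXss : X ⊂ G := by
    refine (Set.ssubset_iff_of_subset hXG).2 ?_
    obtain ⟨y, hy⟩ := hYne
    exact ⟨y, hYG hy, fun hyX => Set.disjoint_left.1 hdisj hyX hy⟩
  have hYss : Y ⊂ G := by
    refine (Set.ssubset_iff_of_subset hYG).2 ?_
    obtain ⟨x, hx⟩ := hXne
    exact ⟨x, hXG hx, fun hxY => Set.disjoint_left.1 hdisj hx hxY⟩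
  have hXind : M.Indep X := hG.2 X hXss
  have hYind : M.Indep Y := hG.2 Y hYss
  have hdepY : M.Dep (Y ∪ {s(u, w)}) :=
    key_dep hE hloc hzero hG huw hXY hdisj hX2 hY2 hmeet
  have hdepX : M.Dep (X ∪ {s(u, w)}) := by
    refine key_dep hE hloc hzero hG huw ?_ hdisj.symm hY2 hX2 ?_
    · rwa [Set.union_comm]
    · rwa [Set.inter_comm]
  -- uw is not an edge of G
  have henG : s(u, w) ∉ G := by
    intro heG
    rw [← hXY] at heG
    rcases heG with he | he
    · have hss : Y ∪ {s(u, w)} ⊂ G := by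
        refine (Set.ssubset_iff_of_subset ?_).2 ?_
        · exact Set.union_subset hYG (by simpa using hXG he)
        · obtain ⟨x, hxX, hxne⟩ :=
            Set.exists_ne_of_one_lt_ncard (by omega : 1 < X.ncard) s(u, w)
          refine ⟨x, hXG hxX, ?_⟩
          rintro (hx | hx)
          · exact Set.disjoint_left.1 hdisj hxX hx
          · exact hxne (by simpa using hx)
      exact hdepY.not_indep (hG.2 _ hss)
    · have hss : X ∪ {s(u, w)} ⊂ G := by
        refine (Set.ssubset_iff_of_subset ?_).2 ?_
        · exact Set.union_subset hXG (by simpa using hYG he)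
        · obtain ⟨y, hyY, hyne⟩ :=
            Set.exists_ne_of_one_lt_ncard (by omega : 1 < Y.ncard) s(u, w)
          refine ⟨y, hYG hyY, ?_⟩
          rintro (hy | hy)
          · exact Set.disjoint_left.1 hdisj hy hyY
          · exact hyne (by simpa using hy)
      exact hdepX.not_indep (hG.2 _ hss)
  have henX : s(u, w) ∉ X := fun h => henG (hXG h)
  have henY : s(u, w) ∉ Y := fun h => henG (hYG h)
  -- extract circuits
  obtain ⟨CX, hCXsub, hCX⟩ := exists_circuitIn_of_dep (Set.toFinite _) hdepX
  obtain ⟨CY, hCYsub, hCY⟩ := exists_circuitIn_of_dep (Set.toFinite _) hdepY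
  have heCX : s(u, w) ∈ CX := by
    by_contra h
    refine hCX.1.not_indep (hXind.subset fun x hx => ?_)
    rcases hCXsub hx with hx' | hx'
    · exact hx'
    · exact absurd ((Set.mem_singleton_iff.1 hx') ▸ hx) h
  have heCY : s(u, w) ∈ CY := by
    by_contra h
    refine hCY.1.not_indep (hYind.subset fun x hx => ?_)
    rcases hCYsub hx with hx' | hx'
    · exact hx'
    · exact absurd ((Set.mem_singleton_iff.1 hx') ▸ hx) h
  have hCXY : CX ≠ CY := by
    intro h
    have hsub : CX ⊆ {s(u, w)} := by
      intro x hx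
      rcases hCXsub hx with hx' | hx'
      · rcases hCYsub (h ▸ hx) with hy' | hy'
        · exact absurd hy' (Set.disjoint_left.1 hdisj hx')
        · exact hy'
      · exact hx'
    have hCXe : CX = {s(u, w)} :=
      Set.Subset.antisymm hsub (by simpa using heCX)
    exact hCX.1.not_indep (hCXe ▸ single_edge_indep hE hloc huw)
  have helim := circuitIn_elim hCX hCY hCXY heCX heCY
  obtain ⟨C, hCsub, hC⟩ := exists_circuitIn_of_dep (Set.toFinite _) helim
  have hCG : C ⊆ G := by
    intro x hx
    obtain ⟨hx', hxe⟩ := hCsub hx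
    rw [Set.mem_singleton_iff] at hxe
    rcases hx' with h | h
    · rcases hCXsub h with h' | h'
      · exact hXG h'
      · exact absurd (Set.mem_singleton_iff.1 h') hxe
    · rcases hCYsub h with h' | h'
      · exact hYG h'
      · exact absurd (Set.mem_singleton_iff.1 h') hxe
  have hCeqG : C = G := by
    by_contra h
    exact hC.1.not_indep (hG.2 C (ssubset_of_subset_of_ne hCG h))
  have hGsub : G ⊆ (CX ∪ CY) \ {s(u, w)} := hCeqG ▸ hCsub
  have hXCX : X ∪ {s(u, w)} = CX := by
    refine Set.Subset.antisymm ?_ hCXsub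
    rintro x (hx | hx)
    · obtain ⟨h', -⟩ := hGsub (hXG hx)
      rcases h' with h' | h'
      · exact h'
      · rcases hCYsub h' with h'' | h''
        · exact absurd h'' (Set.disjoint_left.1 hdisj hx)
        · exact absurd ((Set.mem_singleton_iff.1 h'') ▸ hx) henX
    · exact (Set.mem_singleton_iff.1 hx) ▸ heCX
  have hYCY : Y ∪ {s(u, w)} = CY := by
    refine Set.Subset.antisymm ?_ hCYsub
    rintro x (hx | hx)
    · obtain ⟨h', -⟩ := hGsub (hYG hx)
      rcases h' with h' | h'
      · rcases hCXsub h' with h'' | h''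
        · exact absurd hx (Set.disjoint_left.1 hdisj h'')
        · exact absurd ((Set.mem_singleton_iff.1 h'') ▸ hx) henY
      · exact h'
    · exact (Set.mem_singleton_iff.1 hx) ▸ heCY
  exact ⟨henG, hXCX ▸ hCX, hYCY ▸ hCY⟩
end

section
/- Let H be a connected cubic graph, H ≠ K_4 and H ≠ K_{3,3}. Then H has a vertex with no twin, i.e., a vertex v such that no other vertex has the same neighbourhood as v. -/
open SimpleGraph Finset

/-- Every connected cubic graph other than `K₄` and `K_{3,3}` has a vertex
with no twin: no other vertex has the same neighbourhood. -/
theorem stmt15 {V : Type*} [Fintype V] [DecidableEq V] (H : SimpleGraph V)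
    [DecidableRel H.Adj] (hconn : H.Connected)
    (hcubic : ∀ v : V, H.degree v = 3)
    (hK4 : ¬ Nonempty (H ≃g (⊤ : SimpleGraph (Fin 4))))
    (hK33 : ¬ Nonempty (H ≃g completeBipartiteGraph (Fin 3) (Fin 3))) :
    ∃ v : V, ∀ u : V, u ≠ v → H.neighborSet u ≠ H.neighborSet v := by
  by_contra hcon
  push_neg at hcon
  -- every vertex has a twin, via finsets
  have htwin : ∀ v : V, ∃ u : V, u ≠ v ∧ H.neighborFinset u = H.neighborFinset v := by
    intro v
    obtain ⟨u, hu, hs⟩ := hcon v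
    exact ⟨u, hu, by simp [neighborFinset, hs]⟩
  have hcard : ∀ v : V, (H.neighborFinset v).card = 3 := by
    intro v; rw [H.card_neighborFinset_eq_degree]; exact hcubic v
  obtain ⟨u⟩ := hconn.nonempty
  obtain ⟨a, b, c, hab, hac, hbc, hN⟩ := Finset.card_eq_three.mp (hcard u)
  -- each vertex adjacent to u: a, b, c
  have hmem : ∀ w, H.Adj u w ↔ w ∈ ({a, b, c} : Finset V) := by
    intro w; rw [← hN, H.mem_neighborFinset]
  -- the twin of any neighbor of u is a neighbor of u
  have htwinN : ∀ w, H.Adj u w → ∃ d, d ≠ w ∧ d ∈ ({a,b,c} : Finset V) ∧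
      H.neighborFinset d = H.neighborFinset w := by
    intro w hw
    obtain ⟨d, hd, hNd⟩ := htwin w
    refine ⟨d, hd, ?_, hNd⟩
    rw [← hmem]
    have : u ∈ H.neighborFinset d := by
      rw [hNd, H.mem_neighborFinset]; exact hw.symm
    exact ((H.mem_neighborFinset d u).mp this).symm
  -- key : with the roles b,c possibly swapped
  have key : ∀ b' c' : V, ({a, b', c'} : Finset V) = {a, b, c} → a ≠ b' → a ≠ c' → b' ≠ c' →
      H.neighborFinset b' = H.neighborFinset a → H.neighborFinset c' = H.neighborFinset a := by
    intro b' c' hset hab' hac' hbc' hNb'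
    have hadjc : H.Adj u c' := by rw [hmem, ← hset]; simp
    obtain ⟨d, hd, hdmem, hNd⟩ := htwinN c' hadjc
    rw [← hset] at hdmem
    simp only [Finset.mem_insert, Finset.mem_singleton] at hdmem
    rcases hdmem with h | h | h
    · rw [h] at hNd; exact hNd.symm
    · rw [h] at hNd; rw [← hNd, hNb']
    · exact absurd h hd
  -- all three neighbors of u have the same neighborhood as a
  have hNbc : H.neighborFinset b = H.neighborFinset a ∧
      H.neighborFinset c = H.neighborFinset a := by
    have hadja : H.Adj u a := by rw [hmem]; simp
    obtain ⟨d, hd, hdmem, hNd⟩ := htwinN a hadja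
    simp only [Finset.mem_insert, Finset.mem_singleton] at hdmem
    rcases hdmem with h | h | h
    · exact absurd h hd
    · rw [h] at hNd
      exact ⟨hNd, key b c rfl hab hac hbc hNd⟩
    · rw [h] at hNd
      refine ⟨key c b ?_ hac hab hbc.symm hNd, hNd⟩
      rw [Finset.pair_comm]
  obtain ⟨hNb, hNc⟩ := hNbc
  set M : Finset V := H.neighborFinset a with hM
  set Nf : Finset V := ({a, b, c} : Finset V) with hNf
  have hNfcard : Nf.card = 3 := by
    rw [hNf]
    rw [Finset.card_insert_of_notMem (by simp [hab, hac]),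
      Finset.card_insert_of_notMem (by simp [hbc])]
    rfl
  -- every vertex of M has neighborhood Nf
  have hMN : ∀ m ∈ M, H.neighborFinset m = Nf := by
    intro m hm
    have hsub : Nf ⊆ H.neighborFinset m := by
      intro x hx
      rw [H.mem_neighborFinset]
      rw [hNf] at hx
      simp only [Finset.mem_insert, Finset.mem_singleton] at hx
      rcases hx with rfl | rfl | rfl
      · exact ((H.mem_neighborFinset x m).mp hm).symm
      · rw [← hNb] at hm; exact ((H.mem_neighborFinset x m).mp hm).symm
      · rw [← hNc] at hm; exact ((H.mem_neighborFinset x m).mp hm).symm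
    exact (Finset.eq_of_subset_of_card_le hsub (by rw [hcard, hNfcard])).symm
  -- every vertex of Nf has neighborhood M
  have hNM : ∀ n ∈ Nf, H.neighborFinset n = M := by
    intro n hn
    rw [hNf] at hn
    simp only [Finset.mem_insert, Finset.mem_singleton] at hn
    rcases hn with rfl | rfl | rfl
    · rfl
    · exact hNb
    · exact hNc
  have hdisj : ∀ x, x ∈ M → x ∈ Nf → False := by
    intro x hx hn
    have : x ∈ H.neighborFinset x := by rw [hMN x hx]; exact hn
    exact H.irrefl ((H.mem_neighborFinset x x).mp this)
  have hstep : ∀ x y, H.Adj x y → (x ∈ M ∨ x ∈ Nf) → (y ∈ M ∨ y ∈ Nf) := by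
    intro x y hxy hx
    rcases hx with hx | hx
    · right
      rw [← hMN x hx]
      exact (H.mem_neighborFinset x y).mpr hxy
    · left
      rw [← hNM x hx]
      exact (H.mem_neighborFinset x y).mpr hxy
  have hwalk : ∀ (x z : V), H.Walk x z → (x ∈ M ∨ x ∈ Nf) → (z ∈ M ∨ z ∈ Nf) := by
    intro x z p
    induction p with
    | nil => exact id
    | cons h _ ih => exact fun hx => ih (hstep _ _ h hx)
  have hall : ∀ z : V, z ∈ M ∨ z ∈ Nf := by
    intro z
    exact hwalk u z (hconn u z).some (Or.inl ((H.mem_neighborFinset a u).mpr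
      ((hmem a).mpr (by rw [hNf]; exact Finset.mem_insert_self a _)).symm))
  have hcompl : ∀ x : V, ¬ x ∈ M ↔ x ∈ Nf := by
    intro x
    constructor
    · intro hx; rcases hall x with h | h
      · exact absurd h hx
      · exact h
    · intro hn hx; exact hdisj x hx hn
  have hadj' : ∀ x y : V, H.Adj x y ↔ ((x ∈ M ∧ ¬ y ∈ M) ∨ (¬ x ∈ M ∧ y ∈ M)) := by
    intro x y
    by_cases hx : x ∈ M
    · rw [← H.mem_neighborFinset, hMN x hx, ← hcompl y]
      simp [hx]
    · have hxn : x ∈ Nf := (hcompl x).mp hx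
      rw [← H.mem_neighborFinset, hNM x hxn]
      simp [hx]
  -- build the isomorphism with K_{3,3}
  have cardM : Fintype.card {x // x ∈ M} = 3 := by
    rw [Fintype.card_coe]; exact hcard a
  have cardM' : Fintype.card {x // ¬ x ∈ M} = 3 := by
    rw [Fintype.card_congr (Equiv.subtypeEquivRight hcompl), Fintype.card_coe, hNfcard]
  let eM : {x // x ∈ M} ≃ Fin 3 := Fintype.equivFinOfCardEq cardM
  let eN : {x // ¬ x ∈ M} ≃ Fin 3 := Fintype.equivFinOfCardEq cardM'
  let e : V ≃ Fin 3 ⊕ Fin 3 :=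
    (Equiv.sumCompl (fun x => x ∈ M)).symm.trans (Equiv.sumCongr eM eN)
  refine hK33 ⟨{ toEquiv := e, map_rel_iff' := ?_ }⟩
  intro x y
  rw [hadj' x y]
  show (completeBipartiteGraph (Fin 3) (Fin 3)).Adj (e x) (e y) ↔ _
  by_cases hx : x ∈ M <;> by_cases hy : y ∈ M <;>
    simp [e, completeBipartiteGraph, Equiv.sumCompl_symm_apply_of_pos,
      Equiv.sumCompl_symm_apply_of_neg, hx, hy]
end

section
/- Let H be a connected cubic graph other than K_4 and K_{3,3}, let v be a vertex of H with no twin, and let e = {w_1, w_2} be an edge of H disjoint from v and its three neighbours. Then the graph G obtained from H by adding a new twin of v and deleting the edge e contains no subgraph isomorphic to K_4 and no subgraph isomorphic to K_{3,3}. -/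
/-- The graph `(H ⊕ v) - e` on `Option V`: add a new twin `none` of `v`
(joined to exactly the neighbours of `v`) and delete the edge `{w₁, w₂}`. -/
def cloneMinusEdge {V : Type*} (H : SimpleGraph V) (v w₁ w₂ : V) :
    SimpleGraph (Option V) :=
  SimpleGraph.fromRel fun a b =>
    (∃ x y : V, a = some x ∧ b = some y ∧ H.Adj x y ∧ s(x, y) ≠ s(w₁, w₂)) ∨
    (a = none ∧ ∃ y : V, b = some y ∧ H.Adj v y)


lemma cme_some_some {V : Type*} {H : SimpleGraph V} {v w₁ w₂ x y : V}
    (h : (cloneMinusEdge H v w₁ w₂).Adj (some x) (some y)) : H.Adj x y := by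
  rw [cloneMinusEdge, SimpleGraph.fromRel_adj] at h
  obtain ⟨-, h | h⟩ := h
  · rcases h with ⟨x', y', hx, hy, hadj, -⟩ | ⟨h, -⟩
    · simp_all
    · simp_all
  · rcases h with ⟨x', y', hx, hy, hadj, -⟩ | ⟨h, -⟩
    · simp_all
      exact hadj.symm
    · simp_all

lemma cme_none_some {V : Type*} {H : SimpleGraph V} {v w₁ w₂ y : V}
    (h : (cloneMinusEdge H v w₁ w₂).Adj none (some y)) : H.Adj v y := by
  rw [cloneMinusEdge, SimpleGraph.fromRel_adj] at h
  obtain ⟨-, h | h⟩ := h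
  · rcases h with ⟨x', y', hx, hy, hadj, -⟩ | ⟨-, z, hz, hadj⟩ <;> simp_all
  · rcases h with ⟨x', y', hx, hy, hadj, -⟩ | ⟨hn, z, hz, hadj⟩ <;> simp_all

lemma cme_some_none {V : Type*} {H : SimpleGraph V} {v w₁ w₂ y : V}
    (h : (cloneMinusEdge H v w₁ w₂).Adj (some y) none) : H.Adj v y :=
  cme_none_some h.symm

lemma nbrs_eq {V : Type*} [Fintype V] [DecidableEq V] {H : SimpleGraph V}
    [DecidableRel H.Adj] (hcubic : ∀ u : V, H.degree u = 3) {x : V} {y : Fin 3 → V}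
    (hy : Function.Injective y) (h : ∀ i, H.Adj x (y i)) :
    H.neighborFinset x = {y 0, y 1, y 2} := by
  symm
  apply Finset.eq_of_subset_of_card_le
  · intro z hz
    simp only [Finset.mem_insert, Finset.mem_singleton] at hz
    rcases hz with rfl | rfl | rfl <;>
      simp [SimpleGraph.mem_neighborFinset, h 0, h 1, h 2]
  · have hc : (({y 0, y 1, y 2} : Finset V)).card = 3 :=
      Finset.card_eq_three.mpr ⟨y 0, y 1, y 2, hy.ne (by decide), hy.ne (by decide),
        hy.ne (by decide), rfl⟩
    rw [hc]
    exact le_of_eq (hcubic x)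

lemma twin_contra {V : Type*} [Fintype V] [DecidableEq V] {H : SimpleGraph V}
    [DecidableRel H.Adj] (hcubic : ∀ u : V, H.degree u = 3) (v : V)
    (hvnotwin : ∀ u : V, u ≠ v → H.neighborSet u ≠ H.neighborSet v)
    {x : V} {y : Fin 3 → V} (hy : Function.Injective y)
    (hv : ∀ i, H.Adj v (y i)) (hx : ∀ i, H.Adj x (y i)) : x = v := by
  by_contra hne
  apply hvnotwin x hne
  have h1 := nbrs_eq hcubic hy hx
  have h2 := nbrs_eq hcubic hy hv
  ext z
  have := Finset.ext_iff.mp (h1.trans h2.symm) z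
  simpa [SimpleGraph.mem_neighborFinset] using this

/-- Let `H` be a connected cubic graph with no `K₄` and no `K_{3,3}`
subgraph, `v` a vertex with no twin, and `e = {w₁, w₂}` an edge disjoint
from `v` and its neighbours. Then `(H ⊕ v) - e` contains no subgraph
isomorphic to `K₄` or `K_{3,3}`. -/
theorem stmt16 {V : Type*} [Fintype V] [DecidableEq V] (H : SimpleGraph V)
    [DecidableRel H.Adj] (hconn : H.Connected)
    (hcubic : ∀ v : V, H.degree v = 3)
    (hK4free : ¬ ∃ f : Fin 4 → V, Function.Injective f ∧
      ∀ a b : Fin 4, a ≠ b → H.Adj (f a) (f b))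
    (hK33free : ¬ ∃ f : Fin 3 ⊕ Fin 3 → V, Function.Injective f ∧
      ∀ a b : Fin 3, H.Adj (f (Sum.inl a)) (f (Sum.inr b)))
    (v : V) (hvnotwin : ∀ u : V, u ≠ v → H.neighborSet u ≠ H.neighborSet v)
    (w₁ w₂ : V) (he : H.Adj w₁ w₂)
    (hw₁ : w₁ ≠ v ∧ ¬ H.Adj v w₁) (hw₂ : w₂ ≠ v ∧ ¬ H.Adj v w₂) :
    (¬ ∃ f : Fin 4 → Option V, Function.Injective f ∧
      ∀ a b : Fin 4, a ≠ b → (cloneMinusEdge H v w₁ w₂).Adj (f a) (f b)) ∧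
    (¬ ∃ f : Fin 3 ⊕ Fin 3 → Option V, Function.Injective f ∧
      ∀ a b : Fin 3,
        (cloneMinusEdge H v w₁ w₂).Adj (f (Sum.inl a)) (f (Sum.inr b))) := by
  constructor
  · rintro ⟨f, hinj, hadj⟩
    by_cases hn : ∃ a, f a = none
    · obtain ⟨a, ha⟩ := hn
      set g : Fin 4 → V := fun b => (f b).getD v with hg
      have hsome : ∀ b, b ≠ a → f b = some (g b) := by
        intro b hb
        have hne : f b ≠ none := fun h => hb (hinj (h.trans ha.symm))
        cases hfb : f b with
        | none => exact absurd hfb hne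
        | some z => simp [hg, hfb]
      have hga : g a = v := by simp [hg, ha]
      have hadjv : ∀ b, b ≠ a → H.Adj v (g b) := by
        intro b hb
        have h := hadj a b (Ne.symm hb)
        rw [ha, hsome b hb] at h
        exact cme_none_some h
      apply hK4free
      refine ⟨g, ?_, ?_⟩
      · intro b c hbc
        by_cases hb : b = a <;> by_cases hc : c = a
        · rw [hb, hc]
        · exact absurd (by rw [← hbc, hb, hga]) (hadjv c hc).ne
        · exact absurd (by rw [hbc, hc, hga]) (hadjv b hb).ne
        · exact hinj (by rw [hsome b hb, hsome c hc, hbc])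
      · intro b c hbc
        by_cases hb : b = a <;> by_cases hc : c = a
        · exact absurd (hb.trans hc.symm) hbc
        · rw [hb, hga]; exact hadjv c hc
        · rw [hc, hga]; exact (hadjv b hb).symm
        · have h := hadj b c hbc
          rw [hsome b hb, hsome c hc] at h
          exact cme_some_some h
    · push_neg at hn
      set g : Fin 4 → V := fun b => (f b).getD v with hg
      have hsome : ∀ b, f b = some (g b) := by
        intro b
        cases hfb : f b with
        | none => exact absurd hfb (hn b)
        | some z => simp [hg, hfb]
      apply hK4free
      refine ⟨g, fun b c hbc => hinj (by rw [hsome b, hsome c, hbc]), fun b c hbc => ?_⟩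
      have h := hadj b c hbc
      rw [hsome b, hsome c] at h
      exact cme_some_some h
  · rintro ⟨f, hinj, hadj⟩
    have h3 : ∀ a : Fin 3, a + 1 ≠ a ∧ a + 2 ≠ a ∧ a + 1 ≠ a + 2 := by decide
    by_cases hn : ∃ s, f s = none
    · obtain ⟨s, hs⟩ := hn
      have hsome : ∀ t, t ≠ s → ∃ z, f t = some z := by
        intro t ht
        have hne : f t ≠ none := fun h => ht (hinj (h.trans hs.symm))
        cases hft : f t with
        | none => exact absurd hft hne
        | some z => exact ⟨z, rfl⟩
      cases s with
      | inl a =>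
        set y : Fin 3 → V := fun b => (f (Sum.inr b)).getD v with hy
        have hysome : ∀ b, f (Sum.inr b) = some (y b) := by
          intro b
          obtain ⟨z, hz⟩ := hsome (Sum.inr b) (by simp)
          simp [hy, hz]
        have hyinj : Function.Injective y := by
          intro b c hbc
          have := hinj (by rw [hysome b, hysome c, hbc] : f (Sum.inr b) = f (Sum.inr c))
          exact Sum.inr_injective this
        have hvy : ∀ b, H.Adj v (y b) := by
          intro b
          have h := hadj a b
          rw [hs, hysome b] at h
          exact cme_none_some h
        have hx : ∀ a' : Fin 3, a' ≠ a → (f (Sum.inl a')).getD v = v := by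
          intro a' ha'
          obtain ⟨z, hz⟩ := hsome (Sum.inl a') (by simp [ha'])
          have hxz : ∀ b, H.Adj z (y b) := by
            intro b
            have h := hadj a' b
            rw [hz, hysome b] at h
            exact cme_some_some h
          rw [hz]
          exact twin_contra hcubic v hvnotwin hyinj hvy hxz
        have h1 := hx (a + 1) (h3 a).1
        have h2 := hx (a + 2) (h3 a).2.1
        obtain ⟨z1, hz1⟩ := hsome (Sum.inl (a + 1)) (by simp [(h3 a).1])
        obtain ⟨z2, hz2⟩ := hsome (Sum.inl (a + 2)) (by simp [(h3 a).2.1])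
        rw [hz1] at h1; rw [hz2] at h2
        simp only [Option.getD_some] at h1 h2
        have : Sum.inl (a + 1) = (Sum.inl (a + 2) : Fin 3 ⊕ Fin 3) :=
          hinj (by rw [hz1, hz2, h1, h2])
        exact (h3 a).2.2 (Sum.inl_injective this)
      | inr a =>
        set y : Fin 3 → V := fun b => (f (Sum.inl b)).getD v with hy
        have hysome : ∀ b, f (Sum.inl b) = some (y b) := by
          intro b
          obtain ⟨z, hz⟩ := hsome (Sum.inl b) (by simp)
          simp [hy, hz]
        have hyinj : Function.Injective y := by
          intro b c hbc
          have := hinj (by rw [hysome b, hysome c, hbc] : f (Sum.inl b) = f (Sum.inl c))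
          exact Sum.inl_injective this
        have hvy : ∀ b, H.Adj v (y b) := by
          intro b
          have h := hadj b a
          rw [hs, hysome b] at h
          exact cme_some_none h
        have hx : ∀ a' : Fin 3, a' ≠ a → (f (Sum.inr a')).getD v = v := by
          intro a' ha'
          obtain ⟨z, hz⟩ := hsome (Sum.inr a') (by simp [ha'])
          have hxz : ∀ b, H.Adj z (y b) := by
            intro b
            have h := hadj b a'
            rw [hz, hysome b] at h
            exact (cme_some_some h).symm
          rw [hz]
          exact twin_contra hcubic v hvnotwin hyinj hvy hxz
        have h1 := hx (a + 1) (h3 a).1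
        have h2 := hx (a + 2) (h3 a).2.1
        obtain ⟨z1, hz1⟩ := hsome (Sum.inr (a + 1)) (by simp [(h3 a).1])
        obtain ⟨z2, hz2⟩ := hsome (Sum.inr (a + 2)) (by simp [(h3 a).2.1])
        rw [hz1] at h1; rw [hz2] at h2
        simp only [Option.getD_some] at h1 h2
        have : Sum.inr (a + 1) = (Sum.inr (a + 2) : Fin 3 ⊕ Fin 3) :=
          hinj (by rw [hz1, hz2, h1, h2])
        exact (h3 a).2.2 (Sum.inr_injective this)
    · push_neg at hn
      set g : Fin 3 ⊕ Fin 3 → V := fun s => (f s).getD v with hg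
      have hsome : ∀ s, f s = some (g s) := by
        intro s
        cases hfs : f s with
        | none => exact absurd hfs (hn s)
        | some z => simp [hg, hfs]
      apply hK33free
      refine ⟨g, fun s t hst => hinj (by rw [hsome s, hsome t, hst]), fun a b => ?_⟩
      have h := hadj a b
      rw [hsome (Sum.inl a), hsome (Sum.inr b)] at h
      exact cme_some_some h
end

section
/- Every connected cubic graph other than K_4 and K_{3,3} is 3-connected or has a 2-vertex separator; and every connected cubic graph that is a circuit of some matroidal 2-rigidity family (hence 2-connected) and is neither K_4 nor K_{3,3} must be 3-connected. -/
section Helpers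

variable {α : Type*}

lemma mem_vertsOf_iff {G : Set (Sym2 α)} {v : α} : v ∈ vertsOf G ↔ ∃ e ∈ G, v ∈ e := Iff.rfl

lemma vertsOf_mono {G G' : Set (Sym2 α)} (h : G ⊆ G') : vertsOf G ⊆ vertsOf G' :=
  fun _ ⟨e, he, hve⟩ => ⟨e, h he, hve⟩

lemma vertsOf_insert {G : Set (Sym2 α)} {a b : α} :
    vertsOf (insert s(a,b) G) ⊆ {a, b} ∪ vertsOf G := by
  rintro v ⟨e, he, hve⟩
  rcases he with rfl | he
  · rcases Sym2.mem_iff.1 hve with rfl | rfl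
    · exact Or.inl (Or.inl rfl)
    · exact Or.inl (Or.inr rfl)
  · exact Or.inr ⟨e, he, hve⟩

lemma not_mem_vertsOf_insert {G : Set (Sym2 α)} {a b v : α}
    (hv : v ∉ vertsOf G) (hva : v ≠ a) (hvb : v ≠ b) : v ∉ vertsOf (insert s(a,b) G) := by
  intro h
  rcases vertsOf_insert h with (rfl | rfl) | h
  · exact hva rfl
  · exact hvb rfl
  · exact hv h

lemma edeg_mono {G G' : Set (Sym2 α)} (h : G ⊆ G') (v : α) (hfin : {e ∈ G' | v ∈ e}.Finite) :
    edeg G v ≤ edeg G' v :=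
  Set.ncard_le_ncard (fun e he => ⟨h he.1, he.2⟩) hfin

end Helpers

section Build

variable {F : RigFamily} (hZ : ZeroExt F) {n : ℕ}
include hZ

lemma indep_insert_one {G : Set (Sym2 (Fin n))} {v a : Fin n}
    (hv : v ∉ vertsOf G) (hva : v ≠ a) (hG : (F.M n).Indep G) :
    (F.M n).Indep (insert s(v,a) G) := by
  have := hZ n G v a a hv hva hva hG
  have hpair : ({s(v,a), s(v,a)} : Set (Sym2 (Fin n))) = {s(v,a)} := Set.pair_eq_singleton _
  rw [hpair, Set.union_singleton] at this
  exact this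

lemma indep_insert_two {G : Set (Sym2 (Fin n))} {v a b : Fin n}
    (hv : v ∉ vertsOf G) (hva : v ≠ a) (hvb : v ≠ b) (hG : (F.M n).Indep G) :
    (F.M n).Indep (insert s(v,a) (insert s(v,b) G)) := by
  have := hZ n G v a b hv hva hvb hG
  have : (F.M n).Indep (G ∪ {s(v,a), s(v,b)}) := this
  rwa [Set.union_comm, Set.insert_union, Set.singleton_union] at this

/-- Attach each vertex of `T` to `p` and `q` by two edges. -/
lemma addMany (T : Finset (Fin n)) (S : Set (Sym2 (Fin n))) (p q : Fin n)
    (hpq : p ≠ q) (hS : (F.M n).Indep S)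
    (hT : ∀ x ∈ T, x ∉ vertsOf S ∧ x ≠ p ∧ x ≠ q) :
    ∃ S', (F.M n).Indep S' ∧ S ⊆ S' ∧
      (∀ e ∈ S', e ∈ S ∨ (¬ e.IsDiag ∧ ∀ v ∈ e, v ∈ (↑T : Set (Fin n)) ∪ {p, q})) ∧
      vertsOf S' ⊆ vertsOf S ∪ ↑T ∪ {p, q} ∧ S'.ncard = S.ncard + 2 * T.card := by
  classical
  induction T using Finset.induction_on with
  | empty => exact ⟨S, hS, subset_rfl, fun e he => Or.inl he,
      by intro v hv; exact Or.inl (Or.inl hv), by simp⟩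
  | @insert x T' hx ih =>
    obtain ⟨S'', hS''i, hSS'', hloc, hverts, hcard⟩ :=
      ih (fun y hy => hT y (Finset.mem_insert_of_mem hy))
    obtain ⟨hxv, hxp, hxq⟩ := hT x (Finset.mem_insert_self x T')
    have hxS'' : x ∉ vertsOf S'' := by
      intro h
      rcases hverts h with (h | h) | h
      · exact hxv h
      · exact hx (by exact_mod_cast h)
      · rcases h with h | h
        · exact hxp h
        · exact hxq (by exact_mod_cast h)
    refine ⟨insert s(x,p) (insert s(x,q) S''), indep_insert_two hZ hxS'' hxp hxq hS''i,
      fun e he => Set.mem_insert_of_mem _ (Set.mem_insert_of_mem _ (hSS'' he)), ?_, ?_, ?_⟩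
    · rintro e (rfl | rfl | he)
      · refine Or.inr ⟨by simp [Sym2.isDiag_iff_proj_eq, hxp], ?_⟩
        intro v hv
        rcases Sym2.mem_iff.1 hv with rfl | rfl
        · exact Or.inl (by simp)
        · exact Or.inr (by simp)
      · refine Or.inr ⟨by simp [Sym2.isDiag_iff_proj_eq, hxq], ?_⟩
        intro v hv
        rcases Sym2.mem_iff.1 hv with rfl | rfl
        · exact Or.inl (by simp)
        · exact Or.inr (by simp)
      · rcases hloc e he with h | ⟨hd, hloc'⟩
        · exact Or.inl h
        · refine Or.inr ⟨hd, fun v hv => ?_⟩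
          rcases hloc' v hv with h | h
          · exact Or.inl (by simp only [Finset.coe_insert, Set.mem_insert_iff]; exact Or.inr h)
          · exact Or.inr h
    · intro v hv
      rcases vertsOf_insert hv with (rfl | rfl) | hv'
      · exact Or.inl (Or.inr (by simp))
      · exact Or.inr (by simp)
      · rcases vertsOf_insert hv' with (rfl | rfl) | hv''
        · exact Or.inl (Or.inr (by simp))
        · exact Or.inr (by simp)
        · rcases hverts hv'' with (h | h) | h
          · exact Or.inl (Or.inl h)
          · refine Or.inl (Or.inr ?_)
            simp only [Finset.coe_insert, Set.mem_insert_iff]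
            exact Or.inr (by exact_mod_cast h)
          · exact Or.inr h
    · have h1 : s(x,q) ∉ S'' := fun h => hxS'' ⟨_, h, by simp⟩
      have h2 : s(x,p) ∉ insert s(x,q) S'' := by
        intro h
        rcases h with h | h
        · rw [Sym2.eq_iff] at h
          rcases h with ⟨-, h⟩ | ⟨h, -⟩
          · exact hpq h
          · exact hxq h
        · exact hxS'' ⟨_, h, by simp⟩
      rw [Set.ncard_insert_of_notMem h2 ((Set.toFinite _).insert _),
        Set.ncard_insert_of_notMem h1 (Set.toFinite _), hcard,
        Finset.card_insert_of_notMem hx]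
      ring

end Build

section Matroidal

variable {F : RigFamily} {n : ℕ}

/-- Edges spanned by a finite vertex set `W`. -/
def EV {n : ℕ} (W : Finset (Fin n)) : Set (Sym2 (Fin n)) :=
  {e | ¬ e.IsDiag ∧ ∀ v ∈ e, v ∈ W}

lemma EV_subset_ground (W : Finset (Fin n)) : EV W ⊆ (F.M n).E := by
  rw [F.ground n]; exact fun e he => he.1

lemma pair_mem_EV {W : Finset (Fin n)} {u w : Fin n} (hu : u ∈ W) (hw : w ∈ W) (huw : u ≠ w) :
    s(u,w) ∈ EV W := by
  refine ⟨by simp [Sym2.isDiag_iff_proj_eq, huw], ?_⟩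
  intro v hv; rcases Sym2.mem_iff.1 hv with rfl | rfl <;> assumption

lemma eq_pair_of_mem_EV_pair {u w : Fin n} {e : Sym2 (Fin n)} (hd : ¬ e.IsDiag)
    (h : ∀ v ∈ e, v = u ∨ v = w) : e = s(u,w) := by
  induction e with
  | _ a b =>
    rcases h a (by simp) with rfl | rfl
    · rcases h b (by simp) with rfl | rfl
      · simp at hd
      · rfl
    · rcases h b (by simp) with rfl | rfl
      · exact Sym2.eq_swap
      · simp at hd

/-- Build an independent spanning set of size `2|W| - 3` on `W` containing a
prescribed edge `s(u,w)`. -/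
lemma buildOn (hZ : ZeroExt F) (W : Finset (Fin n)) (u w : Fin n) (hu : u ∈ W) (hw : w ∈ W)
    (huw : u ≠ w) :
    ∃ S, (F.M n).Indep S ∧ s(u,w) ∈ S ∧ S ⊆ EV W ∧ S.ncard = 2 * W.card - 3 := by
  classical
  have h0 : (F.M n).Indep ({s(u,w)} : Set (Sym2 (Fin n))) := by
    have := indep_insert_one hZ (G := (∅ : Set (Sym2 (Fin n)))) (v := u) (a := w)
      (by simp [vertsOf]) huw (F.M n).empty_indep
    simpa using this
  obtain ⟨S, hSi, hS0, hloc, hverts, hcard⟩ := addMany hZ (W \ {u,w}) {s(u,w)} u w huw h0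
    (fun x hx => by
      have hxW := Finset.mem_sdiff.1 hx
      have hxu : x ≠ u := fun h => hxW.2 (by simp [h])
      have hxw : x ≠ w := fun h => hxW.2 (by simp [h])
      refine ⟨?_, hxu, hxw⟩
      rintro ⟨e, he, hxe⟩
      rw [Set.mem_singleton_iff] at he
      subst he
      rcases Sym2.mem_iff.1 hxe with rfl | rfl
      · exact hxu rfl
      · exact hxw rfl)
  refine ⟨S, hSi, hS0 rfl, ?_, ?_⟩
  · intro e he
    rcases hloc e he with h | ⟨hd, hl⟩
    · rw [Set.mem_singleton_iff] at h
      subst h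
      exact pair_mem_EV hu hw huw
    · refine ⟨hd, fun v hv => ?_⟩
      rcases hl v hv with h | h
      · exact (Finset.mem_sdiff.1 (by exact_mod_cast h)).1
      · rcases h with rfl | rfl <;> assumption
  · have hsub : ({u, w} : Finset (Fin n)) ⊆ W := by
      intro x hx; rcases Finset.mem_insert.1 hx with rfl | hx
      · exact hu
      · rw [Finset.mem_singleton.1 hx]; exact hw
    have hcard2 : ({u, w} : Finset (Fin n)).card = 2 := by
      rw [Finset.card_insert_of_notMem (by simpa using huw), Finset.card_singleton]
    have hW2 : 2 ≤ W.card := by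
      calc 2 = ({u, w} : Finset (Fin n)).card := hcard2.symm
      _ ≤ W.card := Finset.card_le_card hsub
    rw [hcard, Finset.card_sdiff_of_subset hsub, hcard2, Set.ncard_singleton]
    omega

/-- Any basis of `EV W` has exactly `2|W| - 3` elements. -/
lemma basis_EV_ncard {B : Set (Sym2 (Fin n))} {W : Finset (Fin n)} (hW : 2 ≤ W.card)
    (hB : (F.M n).IsBasis B (EV W)) : B.ncard = 2 * W.card - 3 := by
  classical
  set m := W.card with hm
  set f : Fin m ↪o Fin n := W.orderEmbOfFin rfl with hf
  have hrange : Set.range f = ↑W := W.range_orderEmbOfFin rfl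
  set g : Sym2 (Fin m) → Sym2 (Fin n) := Sym2.map f with hg
  have hginj : Function.Injective g := Sym2.map.injective f.injective
  set B' : Set (Sym2 (Fin m)) := g ⁻¹' B with hB'
  have himg : g '' B' = B := by
    rw [hB', Set.image_preimage_eq_inter_range]
    refine Set.inter_eq_self_of_subset_left ?_
    intro e he
    obtain ⟨hd, hl⟩ := hB.subset he
    induction e with
    | _ a b =>
      have haW : a ∈ Set.range f := by rw [hrange]; exact_mod_cast hl a (by simp)
      have hbW : b ∈ Set.range f := by rw [hrange]; exact_mod_cast hl b (by simp)
      obtain ⟨a', ha'⟩ := haW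
      obtain ⟨b', hb'⟩ := hbW
      exact ⟨s(a', b'), by simp [hg, ha', hb']⟩
  have hmapdiag : ∀ e : Sym2 (Fin m), ¬ e.IsDiag → ¬ (g e).IsDiag := by
    intro e hd
    induction e with
    | _ a b =>
      simp only [Sym2.isDiag_iff_proj_eq] at hd ⊢
      simp only [hg, Sym2.map_pair_eq]
      exact fun h => hd (f.injective h)
  have hB'i : (F.M m).Indep B' := by
    rw [F.hered f.toEmbedding]
    show (F.M n).Indep (Sym2.map f '' B')
    rw [← hg, himg]
    exact hB.indep
  have hbase : (F.M m).IsBase B' := by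
    refine hB'i.isBase_of_forall_insert ?_
    rintro e ⟨heE, heB'⟩ hins
    have himgins : (F.M n).Indep (insert (g e) B) := by
      have := (F.hered f.toEmbedding (insert e B')).1 hins
      rwa [Set.image_insert_eq, (by rfl : Sym2.map ⇑f.toEmbedding = g), himg] at this
    have hgeEV : g e ∈ EV W := by
      have hed : ¬ e.IsDiag := by
        have := F.ground m ▸ heE
        exact this
      refine ⟨hmapdiag e hed, ?_⟩
      intro v hv
      rw [hg] at hv
      obtain ⟨a, ha, rfl⟩ := Sym2.mem_map.1 hv
      rw [← Finset.mem_coe, ← hrange]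
      exact ⟨a, rfl⟩
    exact heB' (hB.mem_of_insert_indep hgeEV himgins)
  have hcard' : B'.ncard = 2 * m - 3 := F.rank m (hm ▸ hW) B' hbase
  have : B.ncard = B'.ncard := by
    rw [← himg, Set.ncard_image_of_injective _ hginj]
  rw [this, hcard']

/-- An independent set inside the closure of `Z` has at most as many elements
as a basis of `Z`. -/
lemma ncard_le_basis {M : Matroid (Sym2 (Fin n))} {T B Z : Set (Sym2 (Fin n))}
    (hT : M.Indep T) (hTZ : T ⊆ M.closure Z) (hB : M.IsBasis B Z) : T.ncard ≤ B.ncard := by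
  obtain ⟨B2, hB2, hTB2⟩ := hT.subset_isBasis_of_subset hTZ (M.closure_subset_ground Z)
  have h1 : T.ncard ≤ B2.ncard := Set.ncard_le_ncard hTB2 (Set.toFinite _)
  have h2 : B2.encard = B.encard := hB2.encard_eq_encard hB.isBasis_closure_right
  have : B2.ncard = B.ncard := by rw [Set.ncard_def, h2, ← Set.ncard_def]
  omega

end Matroidal

section Sep

variable {F : RigFamily} {n : ℕ}

lemma EV_inter_pair {V1 V2 : Finset (Fin n)} {u w : Fin n}
    (hcap : V1 ∩ V2 ⊆ {u, w}) {e : Sym2 (Fin n)} (h1 : e ∈ EV V1) (h2 : e ∈ EV V2)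
    (huw : u ≠ w) : e = s(u,w) := by
  refine eq_pair_of_mem_EV_pair h1.1 fun v hv => ?_
  have := hcap (Finset.mem_inter.2 ⟨h1.2 v hv, h2.2 v hv⟩)
  simpa using this

/-- Gluing two independent graphs along at most one vertex. -/
lemma oneSep (hZ : ZeroExt F) (V1 V2 : Finset (Fin n)) (u : Fin n)
    (hu1 : u ∈ V1) (hu2 : u ∈ V2) (hcap : V1 ∩ V2 ⊆ {u})
    (h21 : 2 ≤ V1.card) (h22 : 2 ≤ V2.card)
    {X Y : Set (Sym2 (Fin n))} (hX : X ⊆ EV V1) (hY : Y ⊆ EV V2)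
    (hXi : (F.M n).Indep X) (hYi : (F.M n).Indep Y) : (F.M n).Indep (X ∪ Y) := by
  classical
  obtain ⟨BX, hBX, hXBX⟩ := hXi.subset_isBasis_of_subset hX (EV_subset_ground V1)
  obtain ⟨BY, hBY, hYBY⟩ := hYi.subset_isBasis_of_subset hY (EV_subset_ground V2)
  have hBXcard : BX.ncard = 2 * V1.card - 3 := basis_EV_ncard h21 hBX
  have hBYcard : BY.ncard = 2 * V2.card - 3 := basis_EV_ncard h22 hBY
  set D := BX ∪ BY with hD
  have hdisj : Disjoint BX BY := by
    rw [Set.disjoint_left]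
    intro e heX heY
    obtain ⟨hd, hl⟩ := hBX.subset heX
    have hl2 := (hBY.subset heY).2
    have : ∀ v ∈ e, v = u := by
      intro v hv
      have := hcap (Finset.mem_inter.2 ⟨hl v hv, hl2 v hv⟩)
      simpa using this
    induction e with
    | _ a b =>
      rw [this a (by simp), this b (by simp)] at hd
      simp at hd
  have hDcard : D.ncard = BX.ncard + BY.ncard :=
    Set.ncard_union_eq hdisj (Set.toFinite _) (Set.toFinite _)
  -- build a large independent set inside EV V1 ∪ EV V2
  obtain ⟨x1, hx1, hx1u⟩ := Finset.exists_mem_ne (s := V1) (by omega) u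
  obtain ⟨S0, hS0i, -, hS0sub, hS0card⟩ := buildOn hZ V1 u x1 hu1 hx1 (Ne.symm hx1u)
  obtain ⟨q, hq2, hqu⟩ := Finset.exists_mem_ne (s := V2) (by omega) u
  have hqV1 : q ∉ V1 := fun h => hqu (by simpa using hcap (Finset.mem_inter.2 ⟨h, hq2⟩))
  have hqS0 : q ∉ vertsOf S0 := fun ⟨e, he, hqe⟩ => hqV1 (by exact_mod_cast (hS0sub he).2 q hqe)
  have hS1i : (F.M n).Indep (insert s(q,u) S0) := indep_insert_one hZ hqS0 hqu hS0i
  obtain ⟨S2, hS2i, -, hS2loc, -, hS2card⟩ := addMany hZ (V2 \ {u, q}) (insert s(q,u) S0) u q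
    (Ne.symm hqu) hS1i
    (fun x hx => by
      have hxm := Finset.mem_sdiff.1 hx
      have hxu : x ≠ u := fun h => hxm.2 (by simp [h])
      have hxq : x ≠ q := fun h => hxm.2 (by simp [h])
      have hxV1 : x ∉ V1 := fun h => hxu (by simpa using hcap (Finset.mem_inter.2 ⟨h, hxm.1⟩))
      refine ⟨?_, hxu, hxq⟩
      intro hxv
      rcases vertsOf_insert hxv with (rfl | rfl) | h
      · exact hxq rfl
      · exact hxu rfl
      · exact hxV1 (by exact_mod_cast (hS0sub (h.choose_spec.1)).2 x h.choose_spec.2))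
  have hS2sub : S2 ⊆ EV V1 ∪ EV V2 := by
    intro e he
    rcases hS2loc e he with h | ⟨hd, hl⟩
    · rcases h with rfl | h
      · exact Or.inr (pair_mem_EV hq2 hu2 hqu)
      · exact Or.inl (hS0sub h)
    · refine Or.inr ⟨hd, fun v hv => ?_⟩
      rcases hl v hv with h | h
      · exact (Finset.mem_sdiff.1 (by exact_mod_cast h)).1
      · rcases h with rfl | rfl <;> assumption
  have hS2cl : S2 ⊆ (F.M n).closure D := by
    intro e he
    rcases hS2sub he with h | h
    · exact (F.M n).closure_subset_closure Set.subset_union_left (hBX.subset_closure h)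
    · exact (F.M n).closure_subset_closure Set.subset_union_right (hBY.subset_closure h)
  obtain ⟨BD, hBD⟩ := (F.M n).exists_isBasis D
    (Set.union_subset hBX.indep.subset_ground hBY.indep.subset_ground)
  have hle : S2.ncard ≤ BD.ncard := ncard_le_basis hS2i hS2cl hBD
  have hfin : S2.ncard = D.ncard := by
    have h1 : s(q,u) ∉ S0 := fun h => hqS0 ⟨_, h, by simp⟩
    have hins : (insert s(q,u) S0).ncard = S0.ncard + 1 :=
      Set.ncard_insert_of_notMem h1 (Set.toFinite _)
    have hsub2 : ({u, q} : Finset (Fin n)) ⊆ V2 := by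
      intro x hx
      rcases Finset.mem_insert.1 hx with rfl | hx
      · exact hu2
      · rw [Finset.mem_singleton.1 hx]; exact hq2
    have hpair2 : ({u, q} : Finset (Fin n)).card = 2 := by
      rw [Finset.card_insert_of_notMem (by simpa using Ne.symm hqu), Finset.card_singleton]
    have hsd : (V2 \ ({u, q} : Finset (Fin n))).card = V2.card - 2 := by
      rw [Finset.card_sdiff_of_subset hsub2, hpair2]
    rw [hins, hS0card, hsd] at hS2card
    rw [hS2card, hDcard, hBXcard, hBYcard]
    omega
  have hBDD : BD = D := by
    apply Set.eq_of_subset_of_ncard_le hBD.subset _ (Set.toFinite _)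
    omega
  have hDi : (F.M n).Indep D := hBDD ▸ hBD.indep
  exact hDi.subset (Set.union_subset (hXBX.trans Set.subset_union_left)
    (hYBY.trans Set.subset_union_right))

/-- The 2-separation dependence lemma: if a circuit decomposes across a
2-vertex cut `{u,w}`, then the `Y` side together with the extra edge `uw`
is dependent. -/
lemma twoSep (hZ : ZeroExt F) (V1 V2 : Finset (Fin n)) (u w : Fin n) (huw : u ≠ w)
    (hu1 : u ∈ V1) (hw1 : w ∈ V1) (hu2 : u ∈ V2) (hw2 : w ∈ V2)
    (hcap : V1 ∩ V2 ⊆ {u, w}) (h21 : 2 ≤ V1.card) (h22 : 2 ≤ V2.card)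
    {X Y : Set (Sym2 (Fin n))} (hX : X ⊆ EV V1) (hY : Y ⊆ EV V2)
    (hC : IsCircuitIn (F.M n) (X ∪ Y)) (hYbig : ¬ Y ⊆ {s(u,w)}) :
    ¬ (F.M n).Indep (insert s(u,w) Y) := by
  classical
  intro hYuw
  obtain ⟨y0, hy0Y, hy0ne⟩ : ∃ y ∈ Y, y ≠ s(u,w) := by
    by_contra h
    push_neg at h
    exact hYbig h
  have hy0X : y0 ∉ X := fun hy0X => hy0ne (EV_inter_pair hcap (hX hy0X) (hY hy0Y) huw)
  -- X is independent
  have hXi : (F.M n).Indep X := hC.2 X ⟨Set.subset_union_left, fun hss =>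
    hy0X (hss (Or.inr hy0Y))⟩
  have hYsub : insert s(u,w) Y ⊆ EV V2 :=
    Set.insert_subset (pair_mem_EV hu2 hw2 huw) hY
  obtain ⟨BX, hBX, hXBX⟩ := hXi.subset_isBasis_of_subset hX (EV_subset_ground V1)
  obtain ⟨BY, hBY, hYBY⟩ := hYuw.subset_isBasis_of_subset hYsub (EV_subset_ground V2)
  have hBXcard : BX.ncard = 2 * V1.card - 3 := basis_EV_ncard h21 hBX
  have hBYcard : BY.ncard = 2 * V2.card - 3 := basis_EV_ncard h22 hBY
  set D := BX ∪ BY with hD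
  have hDE : D ⊆ (F.M n).E :=
    Set.union_subset hBX.indep.subset_ground hBY.indep.subset_ground
  have hCD : X ∪ Y ⊆ D :=
    Set.union_subset (hXBX.trans Set.subset_union_left)
      ((Set.subset_insert _ _).trans (hYBY.trans Set.subset_union_right))
  have hDdep : ¬ (F.M n).Indep D := fun h => hC.1.1 (h.subset hCD)
  have hinter : BX ∩ BY ⊆ {s(u,w)} := by
    intro e ⟨heX, heY⟩
    exact EV_inter_pair hcap (hBX.subset heX) (hBY.subset heY) huw
  -- the large independent set
  obtain ⟨S0, hS0i, -, hS0sub, hS0card⟩ := buildOn hZ V1 u w hu1 hw1 huw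
  obtain ⟨S2, hS2i, -, hS2loc, -, hS2card⟩ := addMany hZ (V2 \ ({u, w} : Finset (Fin n))) S0 u w
    huw hS0i
    (fun x hx => by
      have hxm := Finset.mem_sdiff.1 hx
      have hxu : x ≠ u := fun h => hxm.2 (by simp [h])
      have hxw : x ≠ w := fun h => hxm.2 (by simp [h])
      have hxV1 : x ∉ V1 := fun h => by
        have := hcap (Finset.mem_inter.2 ⟨h, hxm.1⟩)
        simp only [Finset.mem_insert, Finset.mem_singleton] at this
        rcases this with rfl | rfl
        · exact hxu rfl
        · exact hxw rfl
      refine ⟨?_, hxu, hxw⟩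
      rintro ⟨e, he, hxe⟩
      exact hxV1 (by exact_mod_cast (hS0sub he).2 x hxe))
  have hS2sub : S2 ⊆ EV V1 ∪ EV V2 := by
    intro e he
    rcases hS2loc e he with h | ⟨hd, hl⟩
    · exact Or.inl (hS0sub h)
    · refine Or.inr ⟨hd, fun v hv => ?_⟩
      rcases hl v hv with h | h
      · exact (Finset.mem_sdiff.1 (by exact_mod_cast h)).1
      · rcases h with rfl | rfl <;> assumption
  have hS2cl : S2 ⊆ (F.M n).closure D := by
    intro e he
    rcases hS2sub he with h | h
    · exact (F.M n).closure_subset_closure Set.subset_union_left (hBX.subset_closure h)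
    · exact (F.M n).closure_subset_closure Set.subset_union_right (hBY.subset_closure h)
  have hsub2 : ({u, w} : Finset (Fin n)) ⊆ V2 := by
    intro x hx
    rcases Finset.mem_insert.1 hx with rfl | hx
    · exact hu2
    · rw [Finset.mem_singleton.1 hx]; exact hw2
  have hpair2 : ({u, w} : Finset (Fin n)).card = 2 := by
    rw [Finset.card_insert_of_notMem (by simpa using huw), Finset.card_singleton]
  have hS2c : S2.ncard = 2 * V1.card + 2 * (V2.card - 2) - 3 := by
    rw [hS2card, hS0card, Finset.card_sdiff_of_subset hsub2, hpair2]
    omega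
  -- Step A : s(u,w) ∉ BX
  have huwBX : s(u,w) ∉ BX := by
    intro huwBX
    have hintereq : BX ∩ BY = {s(u,w)} :=
      hinter.antisymm (by
        rintro e rfl
        exact ⟨huwBX, hYBY (Or.inl rfl)⟩)
    have hDcard : D.ncard = BX.ncard + BY.ncard - 1 := by
      have := Set.ncard_inter_add_ncard_union BX BY (Set.toFinite _) (Set.toFinite _)
      rw [hintereq, Set.ncard_singleton, ← hD] at this
      omega
    obtain ⟨BD, hBD⟩ := (F.M n).exists_isBasis D hDE
    have hle : S2.ncard ≤ BD.ncard := ncard_le_basis hS2i hS2cl hBD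
    have hBDD : BD = D := by
      apply Set.eq_of_subset_of_ncard_le hBD.subset _ (Set.toFinite _)
      rw [hDcard, hBXcard, hBYcard]
      omega
    exact hDdep (hBDD ▸ hBD.indep)
  have hdisj : Disjoint BX BY := by
    rw [Set.disjoint_left]
    intro e heX heY
    have := hinter ⟨heX, heY⟩
    rw [Set.mem_singleton_iff] at this
    exact huwBX (this ▸ heX)
  have hDcard : D.ncard = BX.ncard + BY.ncard :=
    Set.ncard_union_eq hdisj (Set.toFinite _) (Set.toFinite _)
  -- K := insert uw BX is dependent
  have huwcl : s(u,w) ∈ (F.M n).closure BX :=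
    hBX.subset_closure (pair_mem_EV hu1 hw1 huw)
  have hKdep : (F.M n).Dep (insert s(u,w) BX) :=
    hBX.indep.insert_dep_iff.2 ⟨huwcl, huwBX⟩
  have hKD : insert s(u,w) BX ⊆ D :=
    Set.insert_subset (Or.inr (hYBY (Or.inl rfl))) Set.subset_union_left
  -- pick f in the circuit that avoids K
  obtain ⟨f, hfC, hfK⟩ : ∃ f ∈ X ∪ Y, f ∉ insert s(u,w) BX := by
    refine ⟨y0, Or.inr hy0Y, ?_⟩
    intro h
    rcases h with h | h
    · exact hy0ne h
    · exact hy0ne (EV_inter_pair hcap (hBX.subset h) (hY hy0Y) huw)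
  have hfD : f ∈ D := hCD hfC
  -- f lies in the closure of (X ∪ Y) \ {f}
  have hCfi : (F.M n).Indep ((X ∪ Y) \ {f}) := hC.2 _ (Set.sdiff_singleton_ssubset.2 hfC)
  have hfcl : f ∈ (F.M n).closure ((X ∪ Y) \ {f}) := by
    have hdep : (F.M n).Dep (insert f ((X ∪ Y) \ {f})) := by
      rw [Set.insert_diff_singleton, Set.insert_eq_self.2 hfC]
      exact hC.1
    exact (hCfi.insert_dep_iff.1 hdep).1
  -- D is spanned by D \ {f}
  have hDcl : D ⊆ (F.M n).closure (D \ {f}) := by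
    intro e he
    by_cases hef : e = f
    · subst hef
      exact (F.M n).closure_subset_closure (Set.diff_subset_diff_left hCD) hfcl
    · exact (F.M n).subset_closure (D \ {f}) (Set.diff_subset.trans hDE) ⟨he, hef⟩
  obtain ⟨BD', hBD'⟩ := (F.M n).exists_isBasis (D \ {f}) (Set.diff_subset.trans hDE)
  have hle : S2.ncard ≤ BD'.ncard :=
    ncard_le_basis hS2i
      (hS2cl.trans (Matroid.closure_subset_closure_of_subset_closure hDcl)) hBD'
  have hKD' : insert s(u,w) BX ⊆ D \ {f} := Set.subset_diff_singleton hKD hfK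
  have hBD'ne : BD' ≠ D \ {f} := by
    intro h
    exact hKdep.1 ((h ▸ hBD'.indep).subset hKD')
  have hlt : BD'.ncard < (D \ {f}).ncard :=
    Set.ncard_lt_ncard (hBD'.subset.ssubset_of_ne hBD'ne) (Set.toFinite _)
  have hdsc : (D \ {f}).ncard = D.ncard - 1 := Set.ncard_diff_singleton_of_mem hfD
  have hD1 : 0 < D.ncard := (Set.ncard_pos (Set.toFinite _)).2 ⟨f, hfD⟩
  rw [hBXcard, hBYcard] at hDcard
  omega

section Subcubic

variable {F : RigFamily} {n : ℕ}

lemma rtg_mem_verts {G : Set (Sym2 (Fin n))} {v x : Fin n}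
    (h : Relation.ReflTransGen (EAdj G) v x) : x = v ∨ x ∈ vertsOf G := by
  induction h with
  | refl => exact Or.inl rfl
  | tail _ hbc _ => exact Or.inr ⟨_, hbc.2, by simp⟩

lemma mem_eq_pair {u : Fin n} {e : Sym2 (Fin n)}
    (hnd : ¬ e.IsDiag) (hu : u ∈ e) : ∃ a, u ≠ a ∧ e = s(u,a) := by
  induction e with
  | _ x y =>
    have hxy : x ≠ y := by simpa [Sym2.isDiag_iff_proj_eq] using hnd
    rcases Sym2.mem_iff.1 hu with rfl | rfl
    · exact ⟨y, hxy, rfl⟩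
    · exact ⟨x, hxy.symm, Sym2.eq_swap⟩

/-- Connected properly subcubic graphs are independent. -/
lemma subcubicIndep (hZ : ZeroExt F) (G : Set (Sym2 (Fin n)))
    (hnd : ∀ e ∈ G, ¬ e.IsDiag) (h3 : ∀ v, edeg G v ≤ 3)
    (hlow : ∀ v ∈ vertsOf G, ∃ x, Relation.ReflTransGen (EAdj G) v x ∧ edeg G x ≤ 2) :
    (F.M n).Indep G := by
  classical
  have main : ∀ k, ∀ G : Set (Sym2 (Fin n)), (vertsOf G).ncard ≤ k →
      (∀ e ∈ G, ¬ e.IsDiag) → (∀ v, edeg G v ≤ 3) →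
      (∀ v ∈ vertsOf G, ∃ x, Relation.ReflTransGen (EAdj G) v x ∧ edeg G x ≤ 2) →
      (F.M n).Indep G := by
    intro k
    induction k with
    | zero =>
      intro G hcard _ _ _
      have hve : vertsOf G = ∅ := by
        have := Set.ncard_eq_zero (Set.toFinite (vertsOf G))
        exact this.1 (Nat.le_zero.1 hcard)
      have : G = ∅ := by
        rw [Set.eq_empty_iff_forall_notMem]
        intro e he
        induction e with
        | _ a b => exact (Set.eq_empty_iff_forall_notMem.1 hve) a ⟨_, he, by simp⟩
      rw [this]
      exact (F.M n).empty_indep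
    | succ k ih =>
      intro G hcard hnd h3 hlow
      by_cases hve : vertsOf G = ∅
      · have : G = ∅ := by
          rw [Set.eq_empty_iff_forall_notMem]
          intro e he
          induction e with
          | _ a b => exact (Set.eq_empty_iff_forall_notMem.1 hve) a ⟨_, he, by simp⟩
        rw [this]; exact (F.M n).empty_indep
      obtain ⟨v0, hv0⟩ := Set.nonempty_iff_ne_empty.2 hve
      obtain ⟨u, hrtg0, hu2⟩ := hlow v0 hv0
      have huG : u ∈ vertsOf G := by
        rcases rtg_mem_verts hrtg0 with rfl | h
        · exact hv0
        · exact h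
      set G' : Set (Sym2 (Fin n)) := {e ∈ G | u ∉ e} with hG'
      have hG'G : G' ⊆ G := fun e he => he.1
      have huG' : u ∉ vertsOf G' := fun ⟨e, he, hue⟩ => he.2 hue
      have hcard' : (vertsOf G').ncard ≤ k := by
        have hsub : vertsOf G' ⊆ vertsOf G \ {u} := fun x hx =>
          ⟨vertsOf_mono hG'G hx, fun h => huG' (h ▸ hx)⟩
        have h1 : (vertsOf G \ {u}).ncard = (vertsOf G).ncard - 1 :=
          Set.ncard_diff_singleton_of_mem huG
        have h2 : 0 < (vertsOf G).ncard := (Set.ncard_pos (Set.toFinite _)).2 ⟨v0, hv0⟩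
        have := Set.ncard_le_ncard hsub (Set.toFinite _)
        omega
      have hnd' : ∀ e ∈ G', ¬ e.IsDiag := fun e he => hnd e he.1
      have h3' : ∀ v, edeg G' v ≤ 3 := by
        intro v
        refine le_trans ?_ (h3 v)
        apply Set.ncard_le_ncard _ (Set.toFinite _)
        intro e he
        exact ⟨he.1.1, he.2⟩
      have key : ∀ v y, Relation.ReflTransGen (EAdj G) v y → v ∈ vertsOf G' →
          ((∃ z, Relation.ReflTransGen (EAdj G') v z ∧ edeg G' z ≤ 2) ∨
            (y ≠ u ∧ Relation.ReflTransGen (EAdj G') v y)) := by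
        intro v y h hv
        induction h with
        | refl => exact Or.inr ⟨fun h => huG' (h ▸ hv), Relation.ReflTransGen.refl⟩
        | @tail b c hvb hbc ihh =>
          rcases ihh with hL | ⟨hbu, hrtg⟩
          · exact Or.inl hL
          obtain ⟨hnebc, hbcG⟩ := hbc
          by_cases hcu : c = u
          · subst hcu
            left
            refine ⟨b, hrtg, ?_⟩
            have hmem : s(b,c) ∈ {e ∈ G | b ∈ e} := ⟨hbcG, by simp⟩
            have hsub : {e ∈ G' | b ∈ e} ⊆ {e ∈ G | b ∈ e} \ {s(b,c)} := by
              rintro e ⟨⟨heG, heu⟩, hbe⟩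
              exact ⟨⟨heG, hbe⟩, fun h => heu (by rw [h]; simp)⟩
            have h1 : ({e ∈ G | b ∈ e} \ {s(b,c)}).ncard = {e ∈ G | b ∈ e}.ncard - 1 :=
              Set.ncard_diff_singleton_of_mem hmem
            have h2 := Set.ncard_le_ncard hsub (Set.toFinite _)
            have h4 := h3 b
            unfold edeg at *
            omega
          · have hbceG' : s(b,c) ∈ G' := by
              refine ⟨hbcG, ?_⟩
              intro hue
              rcases Sym2.mem_iff.1 hue with h | h
              · exact hbu h.symm
              · exact hcu h.symm
            exact Or.inr ⟨fun h => hcu h, hrtg.tail ⟨hnebc, hbceG'⟩⟩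
      have hlow' : ∀ v ∈ vertsOf G', ∃ x, Relation.ReflTransGen (EAdj G') v x ∧
          edeg G' x ≤ 2 := by
        intro v hv
        obtain ⟨x, hrtgx, hx2⟩ := hlow v (vertsOf_mono hG'G hv)
        rcases key v x hrtgx hv with hL | ⟨hxu, hrtg⟩
        · exact hL
        · refine ⟨x, hrtg, ?_⟩
          refine le_trans ?_ hx2
          apply Set.ncard_le_ncard _ (Set.toFinite _)
          intro e he
          exact ⟨he.1.1, he.2⟩
      have hG'i : (F.M n).Indep G' := ih G' hcard' hnd' h3' hlow'
      set Eu : Set (Sym2 (Fin n)) := {e ∈ G | u ∈ e} with hEu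
      have hEucard : Eu.ncard ≤ 2 := hu2
      have hEupos : 0 < Eu.ncard := by
        obtain ⟨e, he, hue⟩ := huG
        exact (Set.ncard_pos (Set.toFinite _)).2 ⟨e, he, hue⟩
      have hGsplit : ∀ e ∈ G, e ∈ G' ∨ e ∈ Eu := by
        intro e he
        by_cases hu : u ∈ e
        · exact Or.inr ⟨he, hu⟩
        · exact Or.inl ⟨he, hu⟩
      have hEc : Eu.ncard = 1 ∨ Eu.ncard = 2 := by omega
      rcases hEc with hE1 | hE2
      · obtain ⟨e0, he0⟩ := (Set.ncard_eq_one).1 hE1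
        have he0Eu : e0 ∈ Eu := by rw [he0]; rfl
        obtain ⟨a, hua, hae⟩ := mem_eq_pair (hnd e0 he0Eu.1) he0Eu.2
        have hGeq : G = insert s(u,a) G' := by
          apply Set.Subset.antisymm
          · intro e he
            rcases hGsplit e he with h | h
            · exact Set.mem_insert_of_mem _ h
            · have : e = e0 := by rw [he0] at h; exact h
              rw [this, hae]; exact Set.mem_insert _ _
          · intro e he
            rcases he with rfl | he
            · rw [← hae]; exact he0Eu.1
            · exact hG'G he
        rw [hGeq]
        exact indep_insert_one hZ huG' hua hG'i
      · obtain ⟨e1, e2, hne, he12⟩ := (Set.ncard_eq_two).1 hE2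
        have he1Eu : e1 ∈ Eu := by rw [he12]; exact Or.inl rfl
        have he2Eu : e2 ∈ Eu := by rw [he12]; exact Or.inr rfl
        obtain ⟨a1, hua1, hae1⟩ := mem_eq_pair (hnd e1 he1Eu.1) he1Eu.2
        obtain ⟨a2, hua2, hae2⟩ := mem_eq_pair (hnd e2 he2Eu.1) he2Eu.2
        have hGeq : G = insert s(u,a1) (insert s(u,a2) G') := by
          apply Set.Subset.antisymm
          · intro e he
            rcases hGsplit e he with h | h
            · exact Set.mem_insert_of_mem _ (Set.mem_insert_of_mem _ h)
            · have : e = e1 ∨ e = e2 := by rw [he12] at h; exact h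
              rcases this with rfl | rfl
              · rw [hae1]; exact Set.mem_insert _ _
              · rw [hae2]; exact Set.mem_insert_of_mem _ (Set.mem_insert _ _)
          · intro e he
            rcases he with rfl | rfl | he
            · rw [← hae1]; exact he1Eu.1
            · rw [← hae2]; exact he2Eu.1
            · exact hG'G he
        rw [hGeq]
        exact indep_insert_two hZ huG' hua1 hua2 hG'i
  exact main (vertsOf G).ncard G le_rfl hnd h3 hlow

end Subcubic

section Graph

variable {F : RigFamily} {n : ℕ}

lemma stayIn {Hs : Set (Sym2 (Fin n))} {A : Set (Fin n)}
    (hend : ∀ e ∈ Hs, (∃ v ∈ A, v ∈ e) → ∀ v ∈ e, v ∈ A)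
    {x y : Fin n} (hx : x ∈ A) (h : Relation.ReflTransGen (EAdj Hs) x y) : y ∈ A := by
  induction h with
  | refl => exact hx
  | @tail b c hvb hbc ihh =>
    exact hend s(b,c) hbc.2 ⟨b, ihh, by simp⟩ c (by simp)

lemma trunc {Hs X : Set (Sym2 (Fin n))} {A : Set (Fin n)} {u w : Fin n}
    (hX : ∀ e ∈ Hs, (∃ v ∈ A, v ∈ e) → e ∈ X)
    (hend : ∀ e ∈ Hs, (∃ v ∈ A, v ∈ e) → ∀ v ∈ e, v ∈ A ∨ v = u ∨ v = w)
    {x y : Fin n} (hx : x ∈ A) (hrtg : Relation.ReflTransGen (EAdj Hs) x y) (hy : y ∉ A) :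
    ∃ z, (z = u ∨ z = w) ∧ Relation.ReflTransGen (EAdj X) x z := by
  have inv : ∀ y', Relation.ReflTransGen (EAdj Hs) x y' →
      ((y' ∈ A ∧ Relation.ReflTransGen (EAdj X) x y') ∨
        (∃ z, (z = u ∨ z = w) ∧ Relation.ReflTransGen (EAdj X) x z)) := by
    intro y' h
    induction h with
    | refl => exact Or.inl ⟨hx, Relation.ReflTransGen.refl⟩
    | @tail b c hvb hbc ihh =>
      rcases ihh with ⟨hbA, hrtgb⟩ | hR
      · have hbcX : s(b,c) ∈ X := hX _ hbc.2 ⟨b, hbA, by simp⟩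
        have hrtgc : Relation.ReflTransGen (EAdj X) x c := hrtgb.tail ⟨hbc.1, hbcX⟩
        rcases hend _ hbc.2 ⟨b, hbA, by simp⟩ c (by simp) with hcA | hcu | hcw
        · exact Or.inl ⟨hcA, hrtgc⟩
        · exact Or.inr ⟨c, Or.inl hcu, hrtgc⟩
        · exact Or.inr ⟨c, Or.inr hcw, hrtgc⟩
      · exact Or.inr hR
  rcases inv y hrtg with ⟨hyA, -⟩ | hR
  · exact absurd hyA hy
  · exact hR

lemma edeg_insert_le {G : Set (Sym2 (Fin n))} {e₀ : Sym2 (Fin n)} {v : Fin n} :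
    edeg (insert e₀ G) v ≤ edeg G v + 1 := by
  have hsub : {e ∈ insert e₀ G | v ∈ e} ⊆ insert e₀ {e ∈ G | v ∈ e} := by
    rintro e ⟨he, hve⟩
    rcases he with rfl | he
    · exact Set.mem_insert _ _
    · exact Set.mem_insert_of_mem _ ⟨he, hve⟩
  exact le_trans (Set.ncard_le_ncard hsub ((Set.toFinite _).insert _))
    (Set.ncard_insert_le _ _)

lemma edeg_insert_not_mem {G : Set (Sym2 (Fin n))} {e₀ : Sym2 (Fin n)} {v : Fin n}
    (hv : v ∉ e₀) : edeg (insert e₀ G) v = edeg G v := by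
  unfold edeg
  congr 1
  ext e
  constructor
  · rintro ⟨he, hve⟩
    rcases he with rfl | he
    · exact absurd hve hv
    · exact ⟨he, hve⟩
  · rintro ⟨he, hve⟩
    exact ⟨Set.mem_insert_of_mem _ he, hve⟩

lemma edeg_insert_mem {G : Set (Sym2 (Fin n))} {e₀ : Sym2 (Fin n)} {v : Fin n}
    (hv : v ∈ e₀) (he₀ : e₀ ∉ G) : edeg (insert e₀ G) v = edeg G v + 1 := by
  unfold edeg
  have : {e ∈ insert e₀ G | v ∈ e} = insert e₀ {e ∈ G | v ∈ e} := by
    ext e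
    constructor
    · rintro ⟨he, hve⟩
      rcases he with rfl | he
      · exact Set.mem_insert _ _
      · exact Set.mem_insert_of_mem _ ⟨he, hve⟩
    · rintro (rfl | ⟨he, hve⟩)
      · exact ⟨Set.mem_insert _ _, hv⟩
      · exact ⟨Set.mem_insert_of_mem _ he, hve⟩
  rw [this, Set.ncard_insert_of_notMem (fun h => he₀ h.1) (Set.toFinite _)]

/-- The contradiction on the low-degree side of a 2-separation. -/
lemma lowSideContra (hZ : ZeroExt F) {P Q : Set (Sym2 (Fin n))} {u w : Fin n}
    (huw : u ≠ w) {V1 V2 : Finset (Fin n)}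
    (hu1 : u ∈ V1) (hw1 : w ∈ V1) (hu2 : u ∈ V2) (hw2 : w ∈ V2)
    (hcap : V1 ∩ V2 ⊆ {u, w}) (h21 : 2 ≤ V1.card) (h22 : 2 ≤ V2.card)
    (hPV : P ⊆ EV V1) (hQV : Q ⊆ EV V2)
    (hC : IsCircuitIn (F.M n) (P ∪ Q)) (hQbig : ¬ Q ⊆ {s(u,w)})
    (hQdeg3 : ∀ v, edeg Q v ≤ 3)
    (hQu : edeg Q u ≤ 1) (hQw : edeg Q w ≤ 2) (huwQ : s(u,w) ∉ Q)
    (hreach : ∀ x ∈ vertsOf Q, ∃ z, (z = u ∨ z = w) ∧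
      Relation.ReflTransGen (EAdj Q) x z) : False := by
  have hdep := twoSep hZ V1 V2 u w huw hu1 hw1 hu2 hw2 hcap h21 h22 hPV hQV hC hQbig
  apply hdep
  apply subcubicIndep hZ
  · rintro e (rfl | he)
    · simp [Sym2.isDiag_iff_proj_eq, huw]
    · exact (hQV he).1
  · intro v
    by_cases hvu : v = u
    · subst hvu
      rw [edeg_insert_mem (by simp) huwQ]
      omega
    by_cases hvw : v = w
    · subst hvw
      rw [edeg_insert_mem (by simp) huwQ]
      omega
    · rw [edeg_insert_not_mem (by simp [Sym2.mem_iff, hvu, hvw])]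
      exact le_trans (hQdeg3 v) (by omega)
  · intro v hv
    have hu2' : edeg (insert s(u,w) Q) u ≤ 2 := by
      rw [edeg_insert_mem (by simp) huwQ]; omega
    have hwu : Relation.ReflTransGen (EAdj (insert s(u,w) Q)) w u :=
      Relation.ReflTransGen.single ⟨huw.symm, by rw [Sym2.eq_swap]; exact Set.mem_insert _ _⟩
    rcases vertsOf_insert hv with (rfl | rfl) | hvQ
    · exact ⟨v, Relation.ReflTransGen.refl, hu2'⟩
    · exact ⟨u, hwu, hu2'⟩
    · obtain ⟨z, hz, hrtg⟩ := hreach v hvQ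
      have hrtg' : Relation.ReflTransGen (EAdj (insert s(u,w) Q)) v z :=
        Relation.ReflTransGen.mono (r := EAdj Q) (p := EAdj (insert s(u,w) Q)) (fun a b hab => ⟨hab.1, Set.mem_insert_of_mem _ hab.2⟩) _ _ hrtg
      rcases hz with rfl | rfl
      · exact ⟨z, hrtg', hu2'⟩
      · exact ⟨u, hrtg'.trans hwu, hu2'⟩

end Graph

section Main

variable {F : RigFamily} {n : ℕ}

lemma edeg_edgeSet (H : SimpleGraph (Fin n)) [DecidableRel H.Adj] (v : Fin n) :
    edeg H.edgeSet v = H.degree v := by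
  classical
  have h1 : edeg H.edgeSet v = (H.incidenceSet v).ncard := rfl
  rw [h1, Set.ncard_eq_toFinset_card', Set.toFinset_card,
    SimpleGraph.card_incidenceSet_eq_degree]

lemma two_le_card_of_pair {x1 x2 : Fin n} {W : Finset (Fin n)} (hne : x1 ≠ x2)
    (h1 : x1 ∈ W) (h2 : x2 ∈ W) : 2 ≤ W.card := by
  have hsub : ({x1, x2} : Finset (Fin n)) ⊆ W := by
    intro t ht
    rcases Finset.mem_insert.1 ht with rfl | ht
    · exact h1
    · rw [Finset.mem_singleton.1 ht]; exact h2
  have : ({x1, x2} : Finset (Fin n)).card = 2 := by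
    rw [Finset.card_insert_of_notMem (by simpa using hne), Finset.card_singleton]
  calc 2 = ({x1, x2} : Finset (Fin n)).card := this.symm
    _ ≤ W.card := Finset.card_le_card hsub
lemma noCut (hZ : ZeroExt F) (H : SimpleGraph (Fin n)) [DecidableRel H.Adj]
    (hconn : H.Connected) (hdeg : ∀ v, H.degree v = 3)
    (hcirc : IsCircuitIn (F.M n) H.edgeSet) (hn4 : 4 ≤ n) :
    ∀ s : Set (Fin n), s.ncard ≤ 2 → (H.induce sᶜ).Connected := by
  classical
  intro s hs
  by_contra hdisc
  -- basic bridges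
  have hnd : ∀ e ∈ H.edgeSet, ¬ e.IsDiag := fun e he => H.not_isDiag_of_mem_edgeSet he
  have hdeg' : ∀ v, edeg H.edgeSet v = 3 := fun v => by
    rw [edeg_edgeSet]; exact hdeg v
  have hR : ∀ x y : Fin n, Relation.ReflTransGen (EAdj H.edgeSet) x y := by
    intro x y
    have := hconn.preconnected x y
    rw [SimpleGraph.reachable_iff_reflTransGen] at this
    exact Relation.ReflTransGen.mono (r := H.Adj) (p := EAdj H.edgeSet) (fun p q hpq => ⟨hpq.ne, (SimpleGraph.mem_edgeSet H).2 hpq⟩) _ _ this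
  -- the separation
  have hscompl : sᶜ.Nonempty := by
    rw [Set.nonempty_compl]
    intro h
    rw [h, Set.ncard_univ, Nat.card_eq_fintype_card, Fintype.card_fin] at hs
    omega
  haveI : Nonempty ↑sᶜ := hscompl.to_subtype
  have hnp : ¬ (H.induce sᶜ).Preconnected := fun h => hdisc ⟨h⟩
  obtain ⟨a, b, hnr⟩ : ∃ a b : ↑sᶜ, ¬ (H.induce sᶜ).Reachable a b := by
    by_contra h
    push_neg at h
    exact hnp fun x y => h x y
  set A : Set (Fin n) := {x | ∃ hx : x ∈ sᶜ, (H.induce sᶜ).Reachable a ⟨x, hx⟩} with hA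
  have haA : (a : Fin n) ∈ A := ⟨a.2, by rw [Subtype.coe_eta]⟩
  have hAc : A ⊆ sᶜ := by rintro x ⟨hx, -⟩; exact hx
  set B : Set (Fin n) := sᶜ \ A with hB
  have hBc : B ⊆ sᶜ := fun x hx => hx.1
  have hbB : (b : Fin n) ∈ B := by
    refine ⟨b.2, ?_⟩
    rintro ⟨hb', hrb⟩
    rw [Subtype.coe_eta] at hrb
    exact hnr hrb
  have hadjA : ∀ x ∈ A, ∀ y, H.Adj x y → y ∈ A ∨ y ∈ s := by
    rintro x ⟨hxs, hrx⟩ y hxy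
    by_cases hys : y ∈ s
    · exact Or.inr hys
    · refine Or.inl ⟨hys, hrx.trans (SimpleGraph.Adj.reachable ?_)⟩
      exact hxy
  set X : Set (Sym2 (Fin n)) := {e ∈ H.edgeSet | ∃ v ∈ A, v ∈ e} with hXdef
  set Y : Set (Sym2 (Fin n)) := H.edgeSet \ X with hYdef
  have hXsub : X ⊆ H.edgeSet := fun e he => he.1
  have hYsub : Y ⊆ H.edgeSet := fun e he => he.1
  have hXY : X ∪ Y = H.edgeSet := Set.union_diff_cancel hXsub
  have hXends : ∀ e ∈ X, ∀ v ∈ e, v ∈ A ∨ v ∈ s := by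
    rintro e ⟨he, v0, hv0A, hv0e⟩ v hve
    by_cases hvA : v ∈ A
    · exact Or.inl hvA
    obtain ⟨c, hnec, rfl⟩ := mem_eq_pair (hnd e he) hv0e
    rcases Sym2.mem_iff.1 hve with rfl | rfl
    · exact Or.inl hv0A
    · rcases hadjA v0 hv0A v ((SimpleGraph.mem_edgeSet H).1 he) with h | h
      · exact absurd h hvA
      · exact Or.inr h
  have hYends : ∀ e ∈ Y, ∀ v ∈ e, v ∈ B ∨ v ∈ s := by
    rintro e ⟨he, heX⟩ v hve
    by_cases hvs : v ∈ s
    · exact Or.inr hvs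
    refine Or.inl ⟨hvs, fun hvA => heX ⟨he, v, hvA, hve⟩⟩
  have hXtouch : ∀ e ∈ H.edgeSet, (∃ v ∈ A, v ∈ e) → e ∈ X := fun e he h => ⟨he, h⟩
  have hYtouch : ∀ e ∈ H.edgeSet, (∃ v ∈ B, v ∈ e) → e ∈ Y := by
    rintro e he ⟨v, hvB, hve⟩
    refine ⟨he, fun heX => ?_⟩
    rcases hXends e heX v hve with h | h
    · exact hvB.2 h
    · exact hvB.1 h
  have edge_at : ∀ x : Fin n, ∃ y, H.Adj x y := by
    intro x
    rw [← SimpleGraph.degree_pos_iff_exists_adj, hdeg x]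
    omega
  obtain ⟨ya, hya⟩ := edge_at ↑a
  obtain ⟨yb, hyb⟩ := edge_at ↑b
  have haXmem : s(↑a, ya) ∈ X := ⟨(SimpleGraph.mem_edgeSet H).2 hya, ↑a, haA, by simp⟩
  have hbYmem : s(↑b, yb) ∈ Y :=
    hYtouch _ ((SimpleGraph.mem_edgeSet H).2 hyb) ⟨↑b, hbB, by simp⟩
  have hXi : (F.M n).Indep X :=
    hcirc.2 X ⟨hXsub, fun hsup => hbYmem.2 (hsup (hYsub hbYmem))⟩
  have hYi : (F.M n).Indep Y :=
    hcirc.2 Y ⟨hYsub, fun hsup => (hsup (hXsub haXmem)).2 haXmem⟩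
  have hCXY : IsCircuitIn (F.M n) (X ∪ Y) := by rwa [hXY]
  -- case on the size of s
  have hcases : s.ncard = 0 ∨ s.ncard = 1 ∨ s.ncard = 2 := by omega
  rcases hcases with h0 | h1 | h2
  -- s = ∅
  · have hsE : s = ∅ := (Set.ncard_eq_zero (Set.toFinite s)).1 h0
    have hend : ∀ e ∈ H.edgeSet, (∃ v ∈ A, v ∈ e) → ∀ v ∈ e, v ∈ A := by
      intro e he htouch v hve
      rcases hXends e ⟨he, htouch⟩ v hve with h | h
      · exact h
      · rw [hsE] at h; exact h.elim
    have : (b : Fin n) ∈ A := stayIn hend haA (hR ↑a ↑b)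
    exact hbB.2 this
  -- s = {u}
  · obtain ⟨u, hsu⟩ := (Set.ncard_eq_one).1 h1
    have hus : u ∈ s := by rw [hsu]; rfl
    have hane : (a : Fin n) ≠ u := fun h => a.2 (h ▸ hus)
    have hbne : (b : Fin n) ≠ u := fun h => b.2 (h ▸ hus)
    set V1 : Finset (Fin n) := (Set.toFinite (A ∪ {u})).toFinset with hV1
    set V2 : Finset (Fin n) := (Set.toFinite (B ∪ {u})).toFinset with hV2
    have hmem1 : ∀ x, x ∈ V1 ↔ x ∈ A ∪ {u} := fun x => Set.Finite.mem_toFinset _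
    have hmem2 : ∀ x, x ∈ V2 ↔ x ∈ B ∪ {u} := fun x => Set.Finite.mem_toFinset _
    have hcap : V1 ∩ V2 ⊆ {u} := by
      intro x hx
      have h1' := (hmem1 x).1 (Finset.mem_inter.1 hx).1
      have h2' := (hmem2 x).1 (Finset.mem_inter.1 hx).2
      rcases h1' with h1' | h1'
      · rcases h2' with h2' | h2'
        · exact absurd h1' h2'.2
        · exact Finset.mem_singleton.2 h2'
      · exact Finset.mem_singleton.2 h1'
    have h21 : 2 ≤ V1.card :=
      two_le_card_of_pair hane ((hmem1 _).2 (Or.inl haA)) ((hmem1 _).2 (Or.inr rfl))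
    have h22 : 2 ≤ V2.card :=
      two_le_card_of_pair hbne ((hmem2 _).2 (Or.inl hbB)) ((hmem2 _).2 (Or.inr rfl))
    have hXV : X ⊆ EV V1 := by
      intro e he
      refine ⟨hnd e (hXsub he), fun v hv => (hmem1 v).2 ?_⟩
      rcases hXends e he v hv with h | h
      · exact Or.inl h
      · exact Or.inr (by rwa [hsu] at h)
    have hYV : Y ⊆ EV V2 := by
      intro e he
      refine ⟨hnd e (hYsub he), fun v hv => (hmem2 v).2 ?_⟩
      rcases hYends e he v hv with h | h
      · exact Or.inl h
      · exact Or.inr (by rwa [hsu] at h)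
    have := oneSep hZ V1 V2 u ((hmem1 _).2 (Or.inr rfl)) ((hmem2 _).2 (Or.inr rfl))
      hcap h21 h22 hXV hYV hXi hYi
    rw [hXY] at this
    exact hcirc.1.1 this
  -- s = {u, w}
  · obtain ⟨u, w, huw, hsu⟩ := (Set.ncard_eq_two).1 h2
    have hus : u ∈ s := by rw [hsu]; exact Or.inl rfl
    have hws : w ∈ s := by rw [hsu]; exact Or.inr rfl
    have haneu : (a : Fin n) ≠ u := fun h => a.2 (h ▸ hus)
    have hanew : (a : Fin n) ≠ w := fun h => a.2 (h ▸ hws)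
    have hbneu : (b : Fin n) ≠ u := fun h => b.2 (h ▸ hus)
    have hbnew : (b : Fin n) ≠ w := fun h => b.2 (h ▸ hws)
    have huA : u ∉ A := fun h => (hAc h) hus
    have hwA : w ∉ A := fun h => (hAc h) hws
    have huB : u ∉ B := fun h => (hBc h) hus
    have hwB : w ∉ B := fun h => (hBc h) hws
    have hXe2 : ∀ e ∈ X, ∀ v ∈ e, v ∈ A ∨ v = u ∨ v = w := by
      intro e he v hv
      rcases hXends e he v hv with h | h
      · exact Or.inl h
      · rw [hsu] at h; exact Or.inr h
    have hYe2 : ∀ e ∈ Y, ∀ v ∈ e, v ∈ B ∨ v = u ∨ v = w := by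
      intro e he v hv
      rcases hYends e he v hv with h | h
      · exact Or.inl h
      · rw [hsu] at h; exact Or.inr h
    -- the degenerate one-vertex attachments
    by_cases hXu : ∃ e ∈ X, u ∈ e
    case neg =>
      set V1 : Finset (Fin n) := (Set.toFinite (A ∪ {w})).toFinset with hV1
      set V2 : Finset (Fin n) := (Set.toFinite (B ∪ {u, w})).toFinset with hV2
      have hmem1 : ∀ x, x ∈ V1 ↔ x ∈ A ∪ {w} := fun x => Set.Finite.mem_toFinset _
      have hmem2 : ∀ x, x ∈ V2 ↔ x ∈ B ∪ {u, w} := fun x => Set.Finite.mem_toFinset _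
      have hcap : V1 ∩ V2 ⊆ {w} := by
        intro x hx
        have h1' := (hmem1 x).1 (Finset.mem_inter.1 hx).1
        have h2' := (hmem2 x).1 (Finset.mem_inter.1 hx).2
        rcases h1' with h1' | h1'
        · rcases h2' with h2' | (h2' | h2')
          · exact absurd h1' h2'.2
          · exact absurd (h2' ▸ h1') huA
          · exact Finset.mem_singleton.2 h2'
        · exact Finset.mem_singleton.2 h1'
      have hXV : X ⊆ EV V1 := by
        intro e he
        refine ⟨hnd e (hXsub he), fun v hv => (hmem1 v).2 ?_⟩
        rcases hXe2 e he v hv with h | h | h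
        · exact Or.inl h
        · exact absurd (⟨e, he, h ▸ hv⟩ : ∃ e ∈ X, u ∈ e) hXu
        · exact Or.inr h
      have hYV : Y ⊆ EV V2 := by
        intro e he
        refine ⟨hnd e (hYsub he), fun v hv => (hmem2 v).2 ?_⟩
        rcases hYe2 e he v hv with h | h | h
        · exact Or.inl h
        · exact Or.inr (Or.inl h)
        · exact Or.inr (Or.inr h)
      have h21 : 2 ≤ V1.card :=
        two_le_card_of_pair hanew ((hmem1 _).2 (Or.inl haA)) ((hmem1 _).2 (Or.inr rfl))
      have h22 : 2 ≤ V2.card :=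
        two_le_card_of_pair hbneu ((hmem2 _).2 (Or.inl hbB)) ((hmem2 _).2 (Or.inr (Or.inl rfl)))
      have := oneSep hZ V1 V2 w ((hmem1 _).2 (Or.inr rfl))
        ((hmem2 _).2 (Or.inr (Or.inr rfl))) hcap h21 h22 hXV hYV hXi hYi
      rw [hXY] at this
      exact hcirc.1.1 this
    by_cases hXw : ∃ e ∈ X, w ∈ e
    case neg =>
      set V1 : Finset (Fin n) := (Set.toFinite (A ∪ {u})).toFinset with hV1
      set V2 : Finset (Fin n) := (Set.toFinite (B ∪ {u, w})).toFinset with hV2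
      have hmem1 : ∀ x, x ∈ V1 ↔ x ∈ A ∪ {u} := fun x => Set.Finite.mem_toFinset _
      have hmem2 : ∀ x, x ∈ V2 ↔ x ∈ B ∪ {u, w} := fun x => Set.Finite.mem_toFinset _
      have hcap : V1 ∩ V2 ⊆ {u} := by
        intro x hx
        have h1' := (hmem1 x).1 (Finset.mem_inter.1 hx).1
        have h2' := (hmem2 x).1 (Finset.mem_inter.1 hx).2
        rcases h1' with h1' | h1'
        · rcases h2' with h2' | (h2' | h2')
          · exact absurd h1' h2'.2
          · exact Finset.mem_singleton.2 h2'
          · exact absurd (h2' ▸ h1') hwA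
        · exact Finset.mem_singleton.2 h1'
      have hXV : X ⊆ EV V1 := by
        intro e he
        refine ⟨hnd e (hXsub he), fun v hv => (hmem1 v).2 ?_⟩
        rcases hXe2 e he v hv with h | h | h
        · exact Or.inl h
        · exact Or.inr h
        · exact absurd (⟨e, he, h ▸ hv⟩ : ∃ e ∈ X, w ∈ e) hXw
      have hYV : Y ⊆ EV V2 := by
        intro e he
        refine ⟨hnd e (hYsub he), fun v hv => (hmem2 v).2 ?_⟩
        rcases hYe2 e he v hv with h | h | h
        · exact Or.inl h
        · exact Or.inr (Or.inl h)
        · exact Or.inr (Or.inr h)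
      have h21 : 2 ≤ V1.card :=
        two_le_card_of_pair haneu ((hmem1 _).2 (Or.inl haA)) ((hmem1 _).2 (Or.inr rfl))
      have h22 : 2 ≤ V2.card :=
        two_le_card_of_pair hbneu ((hmem2 _).2 (Or.inl hbB)) ((hmem2 _).2 (Or.inr (Or.inl rfl)))
      have := oneSep hZ V1 V2 u ((hmem1 _).2 (Or.inr rfl))
        ((hmem2 _).2 (Or.inr (Or.inl rfl))) hcap h21 h22 hXV hYV hXi hYi
      rw [hXY] at this
      exact hcirc.1.1 this
    by_cases hYu : ∃ e ∈ Y, u ∈ e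
    case neg =>
      set V1 : Finset (Fin n) := (Set.toFinite (A ∪ {u, w})).toFinset with hV1
      set V2 : Finset (Fin n) := (Set.toFinite (B ∪ {w})).toFinset with hV2
      have hmem1 : ∀ x, x ∈ V1 ↔ x ∈ A ∪ {u, w} := fun x => Set.Finite.mem_toFinset _
      have hmem2 : ∀ x, x ∈ V2 ↔ x ∈ B ∪ {w} := fun x => Set.Finite.mem_toFinset _
      have hcap : V1 ∩ V2 ⊆ {w} := by
        intro x hx
        have h1' := (hmem1 x).1 (Finset.mem_inter.1 hx).1
        have h2' := (hmem2 x).1 (Finset.mem_inter.1 hx).2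
        rcases h2' with h2' | h2'
        · rcases h1' with h1' | (h1' | h1')
          · exact absurd h1' h2'.2
          · exact absurd (h1' ▸ h2') huB
          · exact Finset.mem_singleton.2 h1'
        · exact Finset.mem_singleton.2 h2'
      have hXV : X ⊆ EV V1 := by
        intro e he
        refine ⟨hnd e (hXsub he), fun v hv => (hmem1 v).2 ?_⟩
        rcases hXe2 e he v hv with h | h | h
        · exact Or.inl h
        · exact Or.inr (Or.inl h)
        · exact Or.inr (Or.inr h)
      have hYV : Y ⊆ EV V2 := by
        intro e he
        refine ⟨hnd e (hYsub he), fun v hv => (hmem2 v).2 ?_⟩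
        rcases hYe2 e he v hv with h | h | h
        · exact Or.inl h
        · exact absurd (⟨e, he, h ▸ hv⟩ : ∃ e ∈ Y, u ∈ e) hYu
        · exact Or.inr h
      have h21 : 2 ≤ V1.card :=
        two_le_card_of_pair hanew ((hmem1 _).2 (Or.inl haA)) ((hmem1 _).2 (Or.inr (Or.inr rfl)))
      have h22 : 2 ≤ V2.card :=
        two_le_card_of_pair hbnew ((hmem2 _).2 (Or.inl hbB)) ((hmem2 _).2 (Or.inr rfl))
      have := oneSep hZ V1 V2 w ((hmem1 _).2 (Or.inr (Or.inr rfl)))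
        ((hmem2 _).2 (Or.inr rfl)) hcap h21 h22 hXV hYV hXi hYi
      rw [hXY] at this
      exact hcirc.1.1 this
    by_cases hYw : ∃ e ∈ Y, w ∈ e
    case neg =>
      set V1 : Finset (Fin n) := (Set.toFinite (A ∪ {u, w})).toFinset with hV1
      set V2 : Finset (Fin n) := (Set.toFinite (B ∪ {u})).toFinset with hV2
      have hmem1 : ∀ x, x ∈ V1 ↔ x ∈ A ∪ {u, w} := fun x => Set.Finite.mem_toFinset _
      have hmem2 : ∀ x, x ∈ V2 ↔ x ∈ B ∪ {u} := fun x => Set.Finite.mem_toFinset _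
      have hcap : V1 ∩ V2 ⊆ {u} := by
        intro x hx
        have h1' := (hmem1 x).1 (Finset.mem_inter.1 hx).1
        have h2' := (hmem2 x).1 (Finset.mem_inter.1 hx).2
        rcases h2' with h2' | h2'
        · rcases h1' with h1' | (h1' | h1')
          · exact absurd h1' h2'.2
          · exact Finset.mem_singleton.2 h1'
          · exact absurd (h1' ▸ h2') hwB
        · exact Finset.mem_singleton.2 h2'
      have hXV : X ⊆ EV V1 := by
        intro e he
        refine ⟨hnd e (hXsub he), fun v hv => (hmem1 v).2 ?_⟩
        rcases hXe2 e he v hv with h | h | h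
        · exact Or.inl h
        · exact Or.inr (Or.inl h)
        · exact Or.inr (Or.inr h)
      have hYV : Y ⊆ EV V2 := by
        intro e he
        refine ⟨hnd e (hYsub he), fun v hv => (hmem2 v).2 ?_⟩
        rcases hYe2 e he v hv with h | h | h
        · exact Or.inl h
        · exact Or.inr h
        · exact absurd (⟨e, he, h ▸ hv⟩ : ∃ e ∈ Y, w ∈ e) hYw
      have h21 : 2 ≤ V1.card :=
        two_le_card_of_pair haneu ((hmem1 _).2 (Or.inl haA)) ((hmem1 _).2 (Or.inr (Or.inl rfl)))
      have h22 : 2 ≤ V2.card :=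
        two_le_card_of_pair hbneu ((hmem2 _).2 (Or.inl hbB)) ((hmem2 _).2 (Or.inr rfl))
      have := oneSep hZ V1 V2 u ((hmem1 _).2 (Or.inr (Or.inl rfl)))
        ((hmem2 _).2 (Or.inr rfl)) hcap h21 h22 hXV hYV hXi hYi
      rw [hXY] at this
      exact hcirc.1.1 this
    -- main case: both u and w meet both sides
    set V1 : Finset (Fin n) := (Set.toFinite (A ∪ {u, w})).toFinset with hV1
    set V2 : Finset (Fin n) := (Set.toFinite (B ∪ {u, w})).toFinset with hV2
    have hmem1 : ∀ x, x ∈ V1 ↔ x ∈ A ∪ {u, w} := fun x => Set.Finite.mem_toFinset _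
    have hmem2 : ∀ x, x ∈ V2 ↔ x ∈ B ∪ {u, w} := fun x => Set.Finite.mem_toFinset _
    have hu1 : u ∈ V1 := (hmem1 _).2 (Or.inr (Or.inl rfl))
    have hw1 : w ∈ V1 := (hmem1 _).2 (Or.inr (Or.inr rfl))
    have hu2 : u ∈ V2 := (hmem2 _).2 (Or.inr (Or.inl rfl))
    have hw2 : w ∈ V2 := (hmem2 _).2 (Or.inr (Or.inr rfl))
    have hcap : V1 ∩ V2 ⊆ {u, w} := by
      intro x hx
      have h1' := (hmem1 x).1 (Finset.mem_inter.1 hx).1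
      have h2' := (hmem2 x).1 (Finset.mem_inter.1 hx).2
      rcases h1' with h1' | h1'
      · rcases h2' with h2' | h2'
        · exact absurd h1' h2'.2
        · rcases h2' with h2' | h2'
          · exact Finset.mem_insert.2 (Or.inl h2')
          · exact Finset.mem_insert.2 (Or.inr (Finset.mem_singleton.2 h2'))
      · rcases h1' with h1' | h1'
        · exact Finset.mem_insert.2 (Or.inl h1')
        · exact Finset.mem_insert.2 (Or.inr (Finset.mem_singleton.2 h1'))
    have hXV : X ⊆ EV V1 := by
      intro e he
      refine ⟨hnd e (hXsub he), fun v hv => (hmem1 v).2 ?_⟩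
      rcases hXe2 e he v hv with h | h | h
      · exact Or.inl h
      · exact Or.inr (Or.inl h)
      · exact Or.inr (Or.inr h)
    have hYV : Y ⊆ EV V2 := by
      intro e he
      refine ⟨hnd e (hYsub he), fun v hv => (hmem2 v).2 ?_⟩
      rcases hYe2 e he v hv with h | h | h
      · exact Or.inl h
      · exact Or.inr (Or.inl h)
      · exact Or.inr (Or.inr h)
    have h21 : 2 ≤ V1.card :=
      two_le_card_of_pair haneu ((hmem1 _).2 (Or.inl haA)) hu1
    have h22 : 2 ≤ V2.card :=
      two_le_card_of_pair hbneu ((hmem2 _).2 (Or.inl hbB)) hu2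
    have hYbig : ¬ Y ⊆ {s(u,w)} := by
      intro hsubY
      have heq := hsubY hbYmem
      rw [Set.mem_singleton_iff] at heq
      have hbmem : (↑b : Fin n) ∈ s(u,w) := heq ▸ (by simp : (↑b : Fin n) ∈ s(↑b, yb))
      rcases Sym2.mem_iff.1 hbmem with h | h
      · exact hbneu h
      · exact hbnew h
    have hXbig : ¬ X ⊆ {s(u,w)} := by
      intro hsubX
      have heq := hsubX haXmem
      rw [Set.mem_singleton_iff] at heq
      have hamem : (↑a : Fin n) ∈ s(u,w) := heq ▸ (by simp : (↑a : Fin n) ∈ s(↑a, ya))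
      rcases Sym2.mem_iff.1 hamem with h | h
      · exact haneu h
      · exact hanew h
    by_cases huwH : s(u,w) ∈ H.edgeSet
    · have huwY : s(u,w) ∈ Y := by
        refine ⟨huwH, ?_⟩
        rintro ⟨-, v, hvA, hve⟩
        rcases Sym2.mem_iff.1 hve with rfl | rfl
        · exact huA hvA
        · exact hwA hvA
      have := twoSep hZ V1 V2 u w huw hu1 hw1 hu2 hw2 hcap h21 h22 hXV hYV hCXY hYbig
      rw [Set.insert_eq_self.2 huwY] at this
      exact this hYi
    -- s(u,w) is not an edge
    have huwX : s(u,w) ∉ X := fun h => huwH (hXsub h)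
    have huwYn : s(u,w) ∉ Y := fun h => huwH (hYsub h)
    have hsplit : ∀ z : Fin n, edeg X z + edeg Y z = 3 := by
      intro z
      have hun : {e ∈ H.edgeSet | z ∈ e} = {e ∈ X | z ∈ e} ∪ {e ∈ Y | z ∈ e} := by
        ext e
        constructor
        · rintro ⟨he, hze⟩
          by_cases heX : e ∈ X
          · exact Or.inl ⟨heX, hze⟩
          · exact Or.inr ⟨⟨he, heX⟩, hze⟩
        · rintro (⟨he, hze⟩ | ⟨he, hze⟩)
          · exact ⟨hXsub he, hze⟩
          · exact ⟨hYsub he, hze⟩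
      have hdisj : Disjoint {e ∈ X | z ∈ e} {e ∈ Y | z ∈ e} :=
        Set.disjoint_left.2 (fun e he1 he2 => he2.1.2 he1.1)
      have hq : edeg X z + edeg Y z = edeg H.edgeSet z := by
        unfold edeg
        rw [hun, Set.ncard_union_eq hdisj (Set.toFinite _) (Set.toFinite _)]
      rw [hq, hdeg' z]
    have hXu1 : 1 ≤ edeg X u := by
      obtain ⟨e, he, hue⟩ := hXu
      exact (Set.ncard_pos (Set.toFinite _)).2 ⟨e, he, hue⟩
    have hYu1 : 1 ≤ edeg Y u := by
      obtain ⟨e, he, hue⟩ := hYu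
      exact (Set.ncard_pos (Set.toFinite _)).2 ⟨e, he, hue⟩
    have hXw1 : 1 ≤ edeg X w := by
      obtain ⟨e, he, hue⟩ := hXw
      exact (Set.ncard_pos (Set.toFinite _)).2 ⟨e, he, hue⟩
    have hYw1 : 1 ≤ edeg Y w := by
      obtain ⟨e, he, hue⟩ := hYw
      exact (Set.ncard_pos (Set.toFinite _)).2 ⟨e, he, hue⟩
    have hreachA : ∀ x ∈ vertsOf X, ∃ z, (z = u ∨ z = w) ∧
        Relation.ReflTransGen (EAdj X) x z := by
      intro x hx
      obtain ⟨e, he, hxe⟩ := hx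
      rcases hXe2 e he x hxe with hxA | rfl | rfl
      · exact trunc hXtouch (fun e' he' ht v hv => hXe2 e' (hXtouch e' he' ht) v hv)
          hxA (hR x u) huA
      · exact ⟨x, Or.inl rfl, Relation.ReflTransGen.refl⟩
      · exact ⟨x, Or.inr rfl, Relation.ReflTransGen.refl⟩
    have hreachB : ∀ x ∈ vertsOf Y, ∃ z, (z = u ∨ z = w) ∧
        Relation.ReflTransGen (EAdj Y) x z := by
      intro x hx
      obtain ⟨e, he, hxe⟩ := hx
      rcases hYe2 e he x hxe with hxB | rfl | rfl
      · exact trunc hYtouch (fun e' he' ht v hv => hYe2 e' (hYtouch e' he' ht) v hv)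
          hxB (hR x u) huB
      · exact ⟨x, Or.inl rfl, Relation.ReflTransGen.refl⟩
      · exact ⟨x, Or.inr rfl, Relation.ReflTransGen.refl⟩
    have hX3 : ∀ v, edeg X v ≤ 3 := by
      intro v
      have := edeg_mono hXsub v (Set.toFinite _)
      rw [hdeg' v] at this
      exact this
    have hY3 : ∀ v, edeg Y v ≤ 3 := by
      intro v
      have := edeg_mono hYsub v (Set.toFinite _)
      rw [hdeg' v] at this
      exact this
    have hcase2 : edeg X u = 1 ∨ edeg Y u = 1 := by
      have := hsplit u
      omega
    rcases hcase2 with hlow | hlow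
    · -- X is the low side
      have hCYX : IsCircuitIn (F.M n) (Y ∪ X) := by rwa [Set.union_comm]
      exact lowSideContra hZ huw hu2 hw2 hu1 hw1
        (by rw [Finset.inter_comm]; exact hcap) h22 h21 hYV hXV hCYX hXbig hX3
        (by omega) (by have := hsplit w; omega) huwX hreachA
    · -- Y is the low side
      exact lowSideContra hZ huw hu1 hw1 hu2 hw2 hcap h21 h22 hXV hYV hCXY hYbig hY3
        (by omega) (by have := hsplit w; omega) huwYn hreachB

end Main

section Final

lemma four_le_card {V : Type} [Fintype V] [DecidableEq V] (G : SimpleGraph V)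
    [DecidableRel G.Adj] (hconn : G.Connected) (hdeg : ∀ v : V, G.degree v = 3) :
    4 ≤ Fintype.card V := by
  haveI : Nonempty V := hconn.nonempty
  obtain ⟨v0⟩ := ‹Nonempty V›
  have h1 : (insert v0 (G.neighborFinset v0)).card = 4 := by
    rw [Finset.card_insert_of_notMem (SimpleGraph.notMem_neighborFinset_self G v0),
      SimpleGraph.card_neighborFinset_eq_degree, hdeg v0]
  calc 4 = (insert v0 (G.neighborFinset v0)).card := h1.symm
    _ ≤ Fintype.card V := Finset.card_le_univ _

lemma part1core {V : Type} [Fintype V] [DecidableEq V] (G : SimpleGraph V)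
    [DecidableRel G.Adj] (hconn : G.Connected) (hdeg : ∀ v : V, G.degree v = 3)
    (s : Set V) (hs : s.ncard ≤ 2) (hdisc : ¬ (G.induce sᶜ).Connected) :
    ∃ t : Finset V, t.card = 2 ∧ ¬ (G.induce (↑tᶜ : Set V)).Connected := by
  classical
  have hc4 : 4 ≤ Fintype.card V := four_le_card G hconn hdeg
  have hscompl : sᶜ.Nonempty := by
    rw [Set.nonempty_compl]
    intro h
    rw [h, Set.ncard_univ, Nat.card_eq_fintype_card] at hs
    omega
  haveI : Nonempty ↑sᶜ := hscompl.to_subtype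
  have hnp : ¬ (G.induce sᶜ).Preconnected := fun h => hdisc ⟨h⟩
  obtain ⟨a, b, hnr⟩ : ∃ a b : ↑sᶜ, ¬ (G.induce sᶜ).Reachable a b := by
    by_contra h
    push_neg at h
    exact hnp fun x y => h x y
  have hab : (a : V) ≠ (b : V) := by
    intro h
    exact hnr (by rw [Subtype.ext h])
  set st : Finset V := (Set.toFinite s).toFinset with hst
  have hstmem : ∀ x, x ∈ st ↔ x ∈ s := fun x => Set.Finite.mem_toFinset _
  have hstcard : st.card = s.ncard := (Set.ncard_eq_toFinset_card s (Set.toFinite s)).symm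
  set U : Finset V := Finset.univ \ {(a : V), (b : V)} with hU
  have hstU : st ⊆ U := by
    intro x hx
    rw [Finset.mem_sdiff]
    refine ⟨Finset.mem_univ _, ?_⟩
    intro hmem
    rcases Finset.mem_insert.1 hmem with rfl | hmem
    · exact a.2 ((hstmem _).1 hx)
    · rw [Finset.mem_singleton.1 hmem] at hx
      exact b.2 ((hstmem _).1 hx)
  have hUcard : 2 ≤ U.card := by
    have hpair : ({(a : V), (b : V)} : Finset V).card = 2 := by
      rw [Finset.card_insert_of_notMem (by simpa using hab), Finset.card_singleton]
    have : U.card = Fintype.card V - 2 := by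
      rw [hU, Finset.card_sdiff_of_subset (Finset.subset_univ _), hpair, Finset.card_univ]
    omega
  obtain ⟨t, hstt, htU, htcard⟩ :=
    Finset.exists_subsuperset_card_eq hstU (by omega) hUcard
  refine ⟨t, htcard, ?_⟩
  intro hcon
  have hanot : (a : V) ∈ (↑tᶜ : Set V) := by
    rw [Finset.coe_compl]
    intro h
    have := htU h
    rw [Finset.mem_sdiff] at this
    exact this.2 (Finset.mem_insert_self _ _)
  have hbnot : (b : V) ∈ (↑tᶜ : Set V) := by
    rw [Finset.coe_compl]
    intro h
    have := htU h
    rw [Finset.mem_sdiff] at this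
    exact this.2 (Finset.mem_insert.2 (Or.inr (Finset.mem_singleton_self _)))
  have hsubc : (↑tᶜ : Set V) ⊆ sᶜ := by
    rw [Finset.coe_compl]
    intro x hx hxs
    exact hx (hstt ((hstmem _).2 hxs))
  let φ : (G.induce (↑tᶜ : Set V)) →g (G.induce sᶜ) :=
    ⟨fun x => ⟨x.1, hsubc x.2⟩, fun h => h⟩
  have hreach := hcon.preconnected ⟨(a : V), hanot⟩ ⟨(b : V), hbnot⟩
  have := hreach.map φ
  exact hnr this

end Final

/-- (1) Every connected cubic graph other than `K₄` and `K_{3,3}` is either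
3-connected or has a 2-vertex separator. (2) Every connected cubic graph
that is a circuit of some matroidal 2-rigidity family (with the 0-extension
property) and is neither `K₄` nor `K_{3,3}` is 3-connected. -/
theorem stmt17 :
    (∀ {V : Type} [Fintype V] [DecidableEq V] (G : SimpleGraph V)
        [DecidableRel G.Adj],
      G.Connected → (∀ v : V, G.degree v = 3) →
      ¬ Nonempty (G ≃g (⊤ : SimpleGraph (Fin 4))) →
      ¬ Nonempty (G ≃g completeBipartiteGraph (Fin 3) (Fin 3)) →
      ((4 ≤ Fintype.card V ∧
          ∀ s : Set V, s.ncard ≤ 2 → (G.induce sᶜ).Connected) ∨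
        ∃ s : Finset V, s.card = 2 ∧
          ¬ (G.induce (↑sᶜ : Set V)).Connected)) ∧
    (∀ (F : RigFamily), ZeroExt F →
      ∀ (n : ℕ) (H : SimpleGraph (Fin n)) [DecidableRel H.Adj],
      H.Connected → (∀ v : Fin n, H.degree v = 3) →
      IsCircuitIn (F.M n) H.edgeSet →
      ¬ Nonempty (H ≃g (⊤ : SimpleGraph (Fin 4))) →
      ¬ Nonempty (H ≃g completeBipartiteGraph (Fin 3) (Fin 3)) →
      (4 ≤ n ∧ ∀ s : Set (Fin n), s.ncard ≤ 2 → (H.induce sᶜ).Connected)) := by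
  constructor
  · intro V _ _ G _ hconn hdeg _ _
    by_cases hall : ∀ s : Set V, s.ncard ≤ 2 → (G.induce sᶜ).Connected
    · exact Or.inl ⟨four_le_card G hconn hdeg, hall⟩
    · push_neg at hall
      obtain ⟨s, hs, hdisc⟩ := hall
      exact Or.inr (part1core G hconn hdeg s hs hdisc)
  · intro F hZ n H _ hconn hdeg hcirc _ _
    have hn4 : 4 ≤ n := by
      have := four_le_card H hconn hdeg
      rwa [Fintype.card_fin] at this
    exact ⟨hn4, noCut hZ H hconn hdeg hcirc hn4⟩
end Sep
end

section
/- Let G be a graph that is not 3-connected but is 2-connected and cubic, with a separating pair {u, w}. Let J be a connected component of G - u - w and X the subgraph induced on V(J) ∪ {u,w}, Y the remaining edges. Then X + {u,w} (adding the edge {u,w} if missing) is a connected graph with maximum degree at most 3 containing a vertex of degree at most 2 (i.e., properly subcubic and connected). -/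
section Aux
variable {V : Type*} (G : SimpleGraph V)

/-- adjacency inside a vertex set `Q` -/
def rIn (Q : Set V) (a b : V) : Prop := a ∈ Q ∧ b ∈ Q ∧ G.Adj a b

lemma rIn_symm {Q : Set V} : Symmetric (rIn G Q) := fun _ _ h => ⟨h.2.1, h.1, h.2.2.symm⟩

lemma reach_of_induce {Q : Set V} {x y : Q} (h : (G.induce Q).Reachable x y) :
    Relation.ReflTransGen (rIn G Q) x.val y.val := by
  rw [SimpleGraph.reachable_iff_reflTransGen] at h
  exact Relation.ReflTransGen.lift (p := rIn G Q) Subtype.val (fun a b hab => ⟨a.2, b.2, hab⟩) x y h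

lemma induce_of_rtg {Q : Set V} :
    ∀ {x y : V}, Relation.ReflTransGen (rIn G Q) x y → ∀ (hx : x ∈ Q) (hy : y ∈ Q),
    (G.induce Q).Reachable ⟨x, hx⟩ ⟨y, hy⟩ := by
  intro x y h
  induction h with
  | refl => intro hx hy; rfl
  | @tail b c hxb hbc ih =>
      intro hx hy
      exact (ih hx hbc.1).trans (SimpleGraph.Adj.reachable (by exact hbc.2.2 :
        (G.induce Q).Adj ⟨b, hbc.1⟩ ⟨c, hy⟩))

lemma exit_lemma {Q P : Set V} {t : V} (hQ : ∀ y ∈ Q, y ∉ P → y = t) (ht : t ∉ P) :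
    ∀ {x : V}, Relation.ReflTransGen (rIn G Q) x t → x ∈ P →
      ∃ s, Relation.ReflTransGen (rIn G P) x s ∧ G.Adj s t := by
  intro x h
  induction h using Relation.ReflTransGen.head_induction_on with
  | refl => intro hx; exact absurd hx ht
  | @head a c hac hct ih =>
      intro hx
      by_cases hc : c ∈ P
      · obtain ⟨s, hs1, hs2⟩ := ih hc
        exact ⟨s, Relation.ReflTransGen.head ⟨hx, hc, hac.2.2⟩ hs1, hs2⟩
      · have hceq : c = t := hQ c hac.2.1 hc
        exact ⟨a, Relation.ReflTransGen.refl, hceq ▸ hac.2.2⟩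

lemma stay_lemma {P : Set V} {z : V} :
    ∀ {x y : V}, Relation.ReflTransGen (rIn G P) x y →
      Relation.ReflTransGen (rIn G P) z x →
      Relation.ReflTransGen
        (rIn G {a | Relation.ReflTransGen (rIn G P) z a}) x y := by
  intro x y h
  induction h using Relation.ReflTransGen.head_induction_on with
  | refl => intro _; exact Relation.ReflTransGen.refl
  | @head a c hac hcy ih =>
      intro hza
      have hzc : Relation.ReflTransGen (rIn G P) z c := hza.tail hac
      exact Relation.ReflTransGen.head ⟨hza, hzc, hac.2.2⟩ (ih hzc)

lemma comp_subset {P : Set V} {z : V} (hz : z ∈ P) {x : V}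
    (h : Relation.ReflTransGen (rIn G P) z x) : x ∈ P := by
  rcases h.cases_tail with h1 | ⟨c, _, hc⟩
  · exact h1 ▸ hz
  · exact hc.2.1

end Aux

/-- The component of `z` in `G - u - w`. -/
def Scomp {V : Type*} (G : SimpleGraph V) (u w z : V) : Set V :=
  {a | Relation.ReflTransGen (rIn G {v : V | v ≠ u ∧ v ≠ w}) z a}

lemma main_lemma {V : Type*} [Fintype V] [DecidableEq V] (G : SimpleGraph V)
    [DecidableRel G.Adj]
    (hcubic : ∀ v : V, G.degree v = 3) (u w : V) (huw : u ≠ w)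
    (z : V) (hz : z ∈ {v : V | v ≠ u ∧ v ≠ w})
    (hu1 : {x ∈ Scomp G u w z | G.Adj u x}.ncard ≤ 1)
    (hw2 : {x ∈ Scomp G u w z | G.Adj w x}.ncard ≤ 2)
    (su : V) (hsu : su ∈ Scomp G u w z) (hsuA : G.Adj u su) :
    (Scomp G u w z).Nonempty ∧ (∀ x ∈ Scomp G u w z, x ≠ u ∧ x ≠ w) ∧
      (∀ a ∈ Scomp G u w z, ∀ b : V, G.Adj a b → b ∈ Scomp G u w z ∪ {u, w}) ∧
      (G.induce (Scomp G u w z)).Connected ∧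
      ∀ X : Set (Sym2 V),
        X = {e ∈ G.edgeSet | ∀ x ∈ e, x ∈ Scomp G u w z ∪ {u, w}} ∪ {s(u, w)} →
        EConnected X ∧ (∀ x ∈ vertsOf X, edeg X x ≤ 3) ∧
          ∃ x ∈ vertsOf X, edeg X x ≤ 2 := by
  set P : Set V := {v : V | v ≠ u ∧ v ≠ w} with hPdef
  set S : Set V := Scomp G u w z with hSdef
  have hSP : ∀ x ∈ S, x ∈ P := fun x hx => comp_subset G hz hx
  have hsymm : Symmetric (Relation.ReflTransGen (rIn G P)) :=
    (@Relation.ReflTransGen.stdSymm _ _ ⟨rIn_symm G⟩).symm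
  -- (b)
  have hb : ∀ x ∈ S, x ≠ u ∧ x ≠ w := fun x hx => hSP x hx
  -- (c) closure
  have hc : ∀ a ∈ S, ∀ b : V, G.Adj a b → b ∈ S ∪ {u, w} := by
    intro a ha b hab
    by_cases hbu : b = u
    · exact Or.inr (by simp [hbu])
    by_cases hbw : b = w
    · exact Or.inr (by simp [hbw])
    · exact Or.inl (Relation.ReflTransGen.tail ha ⟨hSP a ha, ⟨hbu, hbw⟩, hab⟩)
  -- (d) connectivity of induced graph
  have hind : (G.induce S).Connected := by
    haveI : Nonempty ↥S := ⟨⟨z, Relation.ReflTransGen.refl⟩⟩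
    refine SimpleGraph.Connected.mk ?_
    rintro ⟨x, hx⟩ ⟨y, hy⟩
    have h1 : Relation.ReflTransGen (rIn G P) x y := (hsymm hx).trans hy
    have h2 := stay_lemma G h1 hx
    exact induce_of_rtg G h2 hx hy
  refine ⟨⟨z, Relation.ReflTransGen.refl⟩, hb, hc, hind, ?_⟩
  rintro X rfl
  set X : Set (Sym2 V) := {e ∈ G.edgeSet | ∀ x ∈ e, x ∈ S ∪ {u, w}} ∪ {s(u, w)} with hXdef
  have hverts : vertsOf X ⊆ S ∪ {u, w} := by
    rintro v ⟨e, he, hve⟩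
    rcases he with ⟨_, hmem⟩ | he
    · exact hmem v hve
    · have : e = s(u, w) := he
      subst this
      rcases Sym2.mem_iff.mp hve with rfl | rfl
      · exact Or.inr (by simp)
      · exact Or.inr (by simp)
  have hsuP : su ∈ P := hSP su hsu
  -- edges inside S∪{u,w} are in X
  have hedge : ∀ a b : V, G.Adj a b → a ∈ S ∪ {u, w} → b ∈ S ∪ {u, w} →
      s(a, b) ∈ X := by
    intro a b hab ha hb'
    refine Or.inl ⟨G.mem_edgeSet.mpr hab, ?_⟩
    intro x hx
    rcases Sym2.mem_iff.mp hx with rfl | rfl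
    · exact ha
    · exact hb'
  -- connectivity
  have hEsymm : Symmetric (EAdj X) := by
    rintro a b ⟨hne, hm⟩
    exact ⟨hne.symm, by rwa [Sym2.eq_swap]⟩
  have key : ∀ v ∈ S ∪ {u, w}, Relation.ReflTransGen (EAdj X) v u := by
    rintro v (hvS | hv2)
    · have h1 : Relation.ReflTransGen (rIn G P) v su := (hsymm hvS).trans hsu
      have h2 := stay_lemma G h1 hvS
      have h3 : Relation.ReflTransGen (EAdj X) v su := by
        refine Relation.ReflTransGen.mono ?_ _ _ h2
        intro p q hpq
        exact ⟨hpq.2.2.ne, hedge p q hpq.2.2 (Or.inl hpq.1) (Or.inl hpq.2.1)⟩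
      refine h3.tail ⟨hsuP.1, hedge su u hsuA.symm (Or.inl hsu) (Or.inr (by simp))⟩
    · simp only [Set.mem_insert_iff, Set.mem_singleton_iff] at hv2
      rcases hv2 with rfl | rfl
      · exact Relation.ReflTransGen.refl
      · refine Relation.ReflTransGen.single ⟨huw.symm, ?_⟩
        rw [Sym2.eq_swap]
        exact Or.inr rfl
  have hconn : EConnected X := by
    intro p hp q hq
    exact (key p (hverts hp)).trans
      ((@Relation.ReflTransGen.stdSymm _ _ ⟨hEsymm⟩).symm _ _ (key q (hverts hq)))
  -- degree of u
  have hdegu : edeg X u ≤ 2 := by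
    have hsub : {e ∈ X | u ∈ e} ⊆
        (fun y => s(u, y)) '' {x ∈ S | G.Adj u x} ∪ {s(u, w)} := by
      rintro e ⟨he, hue⟩
      rcases he with ⟨heG, hmem⟩ | he
      · obtain ⟨y, rfl⟩ := Sym2.mem_iff_exists.mp hue
        have hadj : G.Adj u y := G.mem_edgeSet.mp heG
        rcases hmem y (Sym2.mem_mk_right u y) with hyS | hy2
        · exact Or.inl ⟨y, ⟨hyS, hadj⟩, rfl⟩
        · simp only [Set.mem_insert_iff, Set.mem_singleton_iff] at hy2
          rcases hy2 with rfl | rfl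
          · exact absurd rfl hadj.ne
          · exact Or.inr rfl
      · exact Or.inr he
    calc edeg X u ≤ ((fun y => s(u, y)) '' {x ∈ S | G.Adj u x} ∪ {s(u, w)}).ncard :=
          Set.ncard_le_ncard hsub (Set.toFinite _)
      _ ≤ ((fun y => s(u, y)) '' {x ∈ S | G.Adj u x}).ncard + ({s(u, w)} : Set _).ncard :=
          Set.ncard_union_le _ _
      _ ≤ {x ∈ S | G.Adj u x}.ncard + 1 := by
          rw [Set.ncard_singleton]
          exact Nat.add_le_add_right (Set.ncard_image_le (Set.toFinite _)) 1
      _ ≤ 2 := by omega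
  -- degree of w
  have hdegw : edeg X w ≤ 3 := by
    have hsub : {e ∈ X | w ∈ e} ⊆
        (fun y => s(w, y)) '' {x ∈ S | G.Adj w x} ∪ {s(u, w)} := by
      rintro e ⟨he, hwe⟩
      rcases he with ⟨heG, hmem⟩ | he
      · obtain ⟨y, rfl⟩ := Sym2.mem_iff_exists.mp hwe
        have hadj : G.Adj w y := G.mem_edgeSet.mp heG
        rcases hmem y (Sym2.mem_mk_right w y) with hyS | hy2
        · exact Or.inl ⟨y, ⟨hyS, hadj⟩, rfl⟩
        · simp only [Set.mem_insert_iff, Set.mem_singleton_iff] at hy2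
          rcases hy2 with rfl | rfl
          · exact Or.inr (Sym2.eq_swap)
          · exact absurd rfl hadj.ne
      · exact Or.inr he
    calc edeg X w ≤ ((fun y => s(w, y)) '' {x ∈ S | G.Adj w x} ∪ {s(u, w)}).ncard :=
          Set.ncard_le_ncard hsub (Set.toFinite _)
      _ ≤ ((fun y => s(w, y)) '' {x ∈ S | G.Adj w x}).ncard + ({s(u, w)} : Set _).ncard :=
          Set.ncard_union_le _ _
      _ ≤ {x ∈ S | G.Adj w x}.ncard + 1 := by
          rw [Set.ncard_singleton]
          exact Nat.add_le_add_right (Set.ncard_image_le (Set.toFinite _)) 1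
      _ ≤ 3 := by omega
  -- degree of S-vertices
  have hdegS : ∀ x ∈ S, edeg X x ≤ 3 := by
    intro x hx
    have hsub : {e ∈ X | x ∈ e} ⊆ G.incidenceSet x := by
      rintro e ⟨he, hxe⟩
      rcases he with ⟨heG, _⟩ | he
      · exact ⟨heG, hxe⟩
      · have : e = s(u, w) := he
        subst this
        rcases Sym2.mem_iff.mp hxe with rfl | rfl
        · exact absurd rfl (hSP x hx).1
        · exact absurd rfl (hSP x hx).2
    calc edeg X x ≤ (G.incidenceSet x).ncard := Set.ncard_le_ncard hsub (Set.toFinite _)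
      _ = 3 := by
          rw [Set.ncard_eq_toFinset_card', Set.toFinset_card,
            SimpleGraph.card_incidenceSet_eq_degree, hcubic]
  refine ⟨hconn, ?_, u, ⟨s(u, w), Or.inr rfl, Sym2.mem_mk_left u w⟩, hdegu⟩
  intro x hx
  rcases hverts hx with hxS | hx2
  · exact hdegS x hxS
  · simp only [Set.mem_insert_iff, Set.mem_singleton_iff] at hx2
    rcases hx2 with rfl | rfl
    · exact le_trans hdegu (by norm_num)
    · exact hdegw

/-- Let `G` be a 2-connected cubic graph with a separating pair `{u, w}`.
Then some connected component `S` of `G - u - w` is such that the graph `X`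
consisting of the edges of `G` inside `S ∪ {u, w}` together with the edge
`{u, w}` is connected, has maximum degree at most 3, and has a vertex of
degree at most 2 (i.e. it is connected and properly subcubic). -/
theorem stmt18 {V : Type*} [Fintype V] [DecidableEq V] (G : SimpleGraph V)
    [DecidableRel G.Adj]
    (hcubic : ∀ v : V, G.degree v = 3)
    (h2conn : 3 ≤ Fintype.card V ∧
      ∀ x : V, (G.induce {v : V | v ≠ x}).Connected)
    (u w : V) (huw : u ≠ w)
    (hsep : ¬ (G.induce {v : V | v ≠ u ∧ v ≠ w}).Connected) :
    ∃ S : Set V, S.Nonempty ∧ (∀ x ∈ S, x ≠ u ∧ x ≠ w) ∧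
      (∀ a ∈ S, ∀ b : V, G.Adj a b → b ∈ S ∪ {u, w}) ∧
      (G.induce S).Connected ∧
      ∀ X : Set (Sym2 V),
        X = {e ∈ G.edgeSet | ∀ x ∈ e, x ∈ S ∪ {u, w}} ∪ {s(u, w)} →
        EConnected X ∧ (∀ x ∈ vertsOf X, edeg X x ≤ 3) ∧
          ∃ x ∈ vertsOf X, edeg X x ≤ 2 := by
  classical
  -- the deleted vertex set is nonempty
  obtain ⟨z0, hz0⟩ : ∃ z, z ∈ {v : V | v ≠ u ∧ v ≠ w} := by
    by_contra h
    push_neg at h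
    have hsub : (Finset.univ : Finset V) ⊆ {u, w} := by
      intro v _
      have hv := h v
      simp only [Set.mem_setOf_eq, not_and_or, not_not] at hv
      simp only [Finset.mem_insert, Finset.mem_singleton]
      tauto
    have h1 := Finset.card_le_card hsub
    rw [Finset.card_univ] at h1
    have h2 : ({u, w} : Finset V).card ≤ 2 :=
      le_trans (Finset.card_insert_le _ _) (by simp)
    omega
  -- two mutually unreachable vertices
  obtain ⟨a, ha, b, hbP, hab⟩ :
      ∃ a ∈ {v : V | v ≠ u ∧ v ≠ w}, ∃ b ∈ {v : V | v ≠ u ∧ v ≠ w},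
        ¬ Relation.ReflTransGen (rIn G {v : V | v ≠ u ∧ v ≠ w}) a b := by
    by_contra hall
    push_neg at hall
    apply hsep
    haveI : Nonempty ↥{v : V | v ≠ u ∧ v ≠ w} := ⟨⟨z0, hz0⟩⟩
    refine SimpleGraph.Connected.mk ?_
    rintro ⟨x, hx⟩ ⟨y, hy⟩
    exact induce_of_rtg G (hall x hx y hy) hx hy
  -- u and w have neighbours in every component
  have exitU : ∀ c ∈ {v : V | v ≠ u ∧ v ≠ w},
      ∃ s, Relation.ReflTransGen (rIn G {v : V | v ≠ u ∧ v ≠ w}) c s ∧ G.Adj s u := by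
    intro c hc
    have hr : (G.induce {v : V | v ≠ w}).Reachable ⟨c, hc.2⟩ ⟨u, huw⟩ :=
      (h2conn.2 w).preconnected _ _
    have h1 := reach_of_induce G hr
    refine exit_lemma G (Q := {v : V | v ≠ w}) ?_ ?_ h1 hc
    · intro y hy hyP
      by_contra hne
      exact hyP ⟨hne, hy⟩
    · intro h; exact h.1 rfl
  have exitW : ∀ c ∈ {v : V | v ≠ u ∧ v ≠ w},
      ∃ s, Relation.ReflTransGen (rIn G {v : V | v ≠ u ∧ v ≠ w}) c s ∧ G.Adj s w := by
    intro c hc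
    have hr : (G.induce {v : V | v ≠ u}).Reachable ⟨c, hc.1⟩ ⟨w, Ne.symm huw⟩ :=
      (h2conn.2 u).preconnected _ _
    have h1 := reach_of_induce G hr
    refine exit_lemma G (Q := {v : V | v ≠ u}) ?_ ?_ h1 hc
    · intro y hy hyP
      by_contra hne
      exact hyP ⟨hy, hne⟩
    · intro h; exact h.2 rfl
  obtain ⟨sa, hsa, hsaU⟩ := exitU a ha
  obtain ⟨sb, hsb, hsbU⟩ := exitU b hbP
  obtain ⟨ta, hta, htaW⟩ := exitW a ha
  obtain ⟨tb, htb, htbW⟩ := exitW b hbP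
  have hsymm : Symmetric (Relation.ReflTransGen (rIn G {v : V | v ≠ u ∧ v ≠ w})) :=
    (@Relation.ReflTransGen.stdSymm _ _ ⟨rIn_symm G⟩).symm
  have hdisj : ∀ x : V, x ∈ Scomp G u w a → x ∈ Scomp G u w b → False := by
    intro x h1 h2
    exact hab (Relation.ReflTransGen.trans h1 (hsymm h2))
  have hncard : ∀ c : V, {x ∈ Scomp G u w a | G.Adj c x}.ncard
      + {x ∈ Scomp G u w b | G.Adj c x}.ncard ≤ 3 := by
    intro c
    have hd : Disjoint {x ∈ Scomp G u w a | G.Adj c x} {x ∈ Scomp G u w b | G.Adj c x} :=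
      Set.disjoint_left.mpr (fun x hx hx' => (hdisj x hx.1 hx'.1).elim)
    have hsubN : {x ∈ Scomp G u w a | G.Adj c x} ∪ {x ∈ Scomp G u w b | G.Adj c x}
        ⊆ G.neighborSet c := by rintro x (hx | hx) <;> exact hx.2
    calc {x ∈ Scomp G u w a | G.Adj c x}.ncard + {x ∈ Scomp G u w b | G.Adj c x}.ncard
        = ({x ∈ Scomp G u w a | G.Adj c x} ∪ {x ∈ Scomp G u w b | G.Adj c x}).ncard :=
          (Set.ncard_union_eq hd (Set.toFinite _) (Set.toFinite _)).symm
      _ ≤ (G.neighborSet c).ncard := Set.ncard_le_ncard hsubN (Set.toFinite _)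
      _ = 3 := by
          rw [Set.ncard_eq_toFinset_card', Set.toFinset_card,
            SimpleGraph.card_neighborSet_eq_degree, hcubic]
  have hpos : ∀ (c x z' : V), x ∈ Scomp G u w z' → G.Adj c x →
      1 ≤ {y ∈ Scomp G u w z' | G.Adj c y}.ncard := by
    intro c x z' hx hcx
    exact (Set.ncard_pos (Set.toFinite _)).mpr ⟨x, hx, hcx⟩
  have h1a : 1 ≤ {y ∈ Scomp G u w a | G.Adj u y}.ncard := hpos u sa a hsa hsaU.symm
  have h1b : 1 ≤ {y ∈ Scomp G u w b | G.Adj u y}.ncard := hpos u sb b hsb hsbU.symm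
  have h1wa : 1 ≤ {y ∈ Scomp G u w a | G.Adj w y}.ncard := hpos w ta a hta htaW.symm
  have h1wb : 1 ≤ {y ∈ Scomp G u w b | G.Adj w y}.ncard := hpos w tb b htb htbW.symm
  have hu3 := hncard u
  have hw3 := hncard w
  by_cases hA : {y ∈ Scomp G u w a | G.Adj u y}.ncard ≤ 1
  · exact ⟨Scomp G u w a,
      main_lemma G hcubic u w huw a ha hA (by omega) sa hsa hsaU.symm⟩
  · exact ⟨Scomp G u w b,
      main_lemma G hcubic u w huw b hbP (by omega) (by omega) sb hsb hsbU.symm⟩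
end
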